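/- arXiv:2310.08862 — 6 statements merged into one kernel-verified Lean document; each statement's English description precedes it below -/
import Mathlib

section
/- Let p > 1, γ ∈ ℝ, and ω > γ²/4. Then the function Q = Q_{ω,γ} is strictly positive and even on ℝ, continuous on ℝ, twice continuously differentiable on ℝ \ {0}, satisfies the stationary equation −Q''(x) + ω·Q(x) = Q(x)^p for every x ≠ 0, the one-sided derivatives Q'(0⁺) := lim_{x→0⁺} Q'(x) and Q'(0⁻) := lim_{x→0⁻} Q'(x) exist, and they satisfy the jump condition Q'(0⁺) − Q'(0⁻) = −γ·Q(0). -/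
open Real Filter Set

/-- Inverse hyperbolic tangent. -/
noncomputable def artanh (y : ℝ) : ℝ := (1 / 2) * Real.log ((1 + y) / (1 - y))

/-- The ground state profile `Q_{ω,γ}`. -/
noncomputable def Qsol (p γ ω : ℝ) (x : ℝ) : ℝ :=
  (((p + 1) * ω / 2) *
      (1 / Real.cosh (((p - 1) * Real.sqrt ω / 2) * |x| + _root_.artanh (γ / (2 * Real.sqrt ω)))) ^ 2)
    ^ (1 / (p - 1))

/-! ### Auxiliary definitions -/

noncomputable def Qu (p γ ω x : ℝ) : ℝ :=
  ((p - 1) * Real.sqrt ω / 2) * x + _root_.artanh (γ / (2 * Real.sqrt ω))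

noncomputable def Qf (p γ ω x : ℝ) : ℝ :=
  ((p + 1) * ω / 2) * (1 / Real.cosh (Qu p γ ω x)) ^ 2

noncomputable def Qg (p γ ω x : ℝ) : ℝ := Qf p γ ω x ^ (1 / (p - 1))

noncomputable def Qg1 (p γ ω x : ℝ) : ℝ :=
  -Real.sqrt ω * (Real.sinh (Qu p γ ω x) / Real.cosh (Qu p γ ω x)) * Qg p γ ω x

noncomputable def Qg2 (p γ ω x : ℝ) : ℝ :=
  -Real.sqrt ω * ((((p - 1) * Real.sqrt ω / 2) / Real.cosh (Qu p γ ω x) ^ 2) * Qg p γ ω x +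
    (Real.sinh (Qu p γ ω x) / Real.cosh (Qu p γ ω x)) * Qg1 p γ ω x)

lemma Qsol_eq (p γ ω x : ℝ) : Qsol p γ ω x = Qg p γ ω |x| := rfl

lemma tanh_artanh {y : ℝ} (h1 : -1 < y) (h2 : y < 1) :
    Real.sinh (_root_.artanh y) / Real.cosh (_root_.artanh y) = y := by
  have hy1 : (0:ℝ) < 1 - y := by linarith
  have hy2 : (0:ℝ) < 1 + y := by linarith
  have hE' : Real.exp (_root_.artanh y) ^ 2 = (1 + y) / (1 - y) := by
    rw [sq, ← Real.exp_add, _root_.artanh, show (1:ℝ)/2 * Real.log ((1+y)/(1-y)) +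
      (1:ℝ)/2 * Real.log ((1+y)/(1-y)) = Real.log ((1+y)/(1-y)) by ring]
    exact Real.exp_log (by positivity)
  have hEpos := Real.exp_pos (_root_.artanh y)
  rw [Real.sinh_eq, Real.cosh_eq, Real.exp_neg]
  rw [eq_div_iff hy1.ne'] at hE'
  rw [div_eq_iff (by positivity : ((Real.exp (_root_.artanh y) + (Real.exp (_root_.artanh y))⁻¹) / 2) ≠ 0)]
  field_simp
  nlinarith [hE']

section aux
variable {p γ ω : ℝ} (hp : 1 < p) (hω : γ ^ 2 / 4 < ω)
include hp hω
lemma hω0 : 0 < ω := lt_of_le_of_lt (by positivity) hω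
lemma hQf_pos (x : ℝ) : 0 < Qf p γ ω x := by
  have := hω0 hp hω
  have h := Real.cosh_pos (Qu p γ ω x)
  rw [Qf]
  positivity
lemma hQg_pos (x : ℝ) : 0 < Qg p γ ω x := Real.rpow_pos_of_pos (hQf_pos hp hω x) _
lemma hasDerivAt_Qf (x : ℝ) :
    HasDerivAt (Qf p γ ω) ((-(2 * ((p - 1) * Real.sqrt ω / 2)) *
      (Real.sinh (Qu p γ ω x) / Real.cosh (Qu p γ ω x))) * Qf p γ ω x) x := by
  have hu : HasDerivAt (fun x : ℝ => Qu p γ ω x) ((p - 1) * Real.sqrt ω / 2) x := by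
    simpa [Qu] using (((hasDerivAt_id x).const_mul ((p - 1) * Real.sqrt ω / 2)).add_const
      (_root_.artanh (γ / (2 * Real.sqrt ω))))
  have hch : HasDerivAt (fun x : ℝ => Real.cosh (Qu p γ ω x))
      (Real.sinh (Qu p γ ω x) * ((p - 1) * Real.sqrt ω / 2)) x :=
    (Real.hasDerivAt_cosh _).comp x hu
  have hcosh := Real.cosh_pos (Qu p γ ω x)
  have hinv := hch.inv hcosh.ne'
  have hpow := hinv.pow 2
  have hf := hpow.const_mul ((p + 1) * ω / 2)
  convert hf using 1
  · rfl
  · rfl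
  · funext y
    rw [Qf, one_div]
    rfl
  · rw [Qf]
    simp only [Pi.inv_apply, Nat.cast_ofNat, Nat.reduceSub, pow_one]
    field_simp

lemma hasDerivAt_Qg (x : ℝ) : HasDerivAt (Qg p γ ω) (Qg1 p γ ω x) x := by
  have hfpos := hQf_pos hp hω x
  have h := (hasDerivAt_Qf hp hω x).rpow_const (p := 1 / (p - 1)) (Or.inl hfpos.ne')
  have hp1 : p - 1 ≠ 0 := by linarith
  convert h using 1
  · rfl
  rw [Qg1, Qg, show (1:ℝ) / (p - 1) = (1 / (p - 1) - 1) + 1 by ring,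
    Real.rpow_add hfpos, Real.rpow_one]
  field_simp
  ring

lemma hasDerivAt_Qg1 (x : ℝ) : HasDerivAt (Qg1 p γ ω) (Qg2 p γ ω x) x := by
  have hu : HasDerivAt (fun x : ℝ => Qu p γ ω x) ((p - 1) * Real.sqrt ω / 2) x := by
    simpa [Qu] using (((hasDerivAt_id x).const_mul ((p - 1) * Real.sqrt ω / 2)).add_const
      (_root_.artanh (γ / (2 * Real.sqrt ω))))
  have hch : HasDerivAt (fun x : ℝ => Real.cosh (Qu p γ ω x))
      (Real.sinh (Qu p γ ω x) * ((p - 1) * Real.sqrt ω / 2)) x :=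
    (Real.hasDerivAt_cosh _).comp x hu
  have hsh : HasDerivAt (fun x : ℝ => Real.sinh (Qu p γ ω x))
      (Real.cosh (Qu p γ ω x) * ((p - 1) * Real.sqrt ω / 2)) x :=
    (Real.hasDerivAt_sinh _).comp x hu
  have hcosh := Real.cosh_pos (Qu p γ ω x)
  have htanh := hsh.div hch hcosh.ne'
  have h := ((htanh.mul (hasDerivAt_Qg hp hω x)).const_mul (-Real.sqrt ω))
  have hid : Real.cosh (Qu p γ ω x) ^ 2 - Real.sinh (Qu p γ ω x) ^ 2 = 1 :=
    Real.cosh_sq_sub_sinh_sq _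
  have e : Real.cosh (Qu p γ ω x) * ((p - 1) * Real.sqrt ω / 2) * Real.cosh (Qu p γ ω x) -
      Real.sinh (Qu p γ ω x) * (Real.sinh (Qu p γ ω x) * ((p - 1) * Real.sqrt ω / 2)) =
      (p - 1) * Real.sqrt ω / 2 := by linear_combination ((p - 1) * Real.sqrt ω / 2) * hid
  rw [e] at h
  have hfun : (fun y => -Real.sqrt ω * (((fun x => Real.sinh (Qu p γ ω x)) / fun x => Real.cosh (Qu p γ ω x)) * Qg p γ ω) y) = Qg1 p γ ω := by
    funext y; rw [Qg1]; simp only [Pi.mul_apply, Pi.div_apply]; ring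
  rw [hfun] at h
  convert h using 1
  · rfl
  · rfl
  · rfl


lemma ode_Qg (x : ℝ) :
    -(Qg2 p γ ω x) + ω * Qg p γ ω x = Qg p γ ω x ^ p := by
  have hfpos := hQf_pos hp hω x
  have hp1 : p - 1 ≠ 0 := by linarith
  have hw := hω0 hp hω
  have hsq : Real.sqrt ω ^ 2 = ω := Real.sq_sqrt hw.le
  have hcosh := Real.cosh_pos (Qu p γ ω x)
  have hid : Real.cosh (Qu p γ ω x) ^ 2 - Real.sinh (Qu p γ ω x) ^ 2 = 1 :=
    Real.cosh_sq_sub_sinh_sq _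
  have hrhs : Qg p γ ω x ^ p = Qg p γ ω x * Qf p γ ω x := by
    rw [Qg, ← Real.rpow_mul hfpos.le,
      show 1 / (p - 1) * p = 1 / (p - 1) + 1 by field_simp; ring,
      Real.rpow_add hfpos, Real.rpow_one]
  rw [hrhs]
  simp only [Qg2, Qg1, Qf]
  field_simp
  linear_combination (Qg p γ ω x * (p - 1 - 2 * Real.sinh (Qu p γ ω x) ^ 2)) * hsq +
    (2 * ω * Qg p γ ω x) * hid
lemma contDiff_Qg : ContDiff ℝ 2 (Qg p γ ω) := by
  have hf : ContDiff ℝ 2 (Qf p γ ω) := by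
    show ContDiff ℝ 2 fun x => ((p + 1) * ω / 2) * (1 / Real.cosh (Qu p γ ω x)) ^ 2
    refine contDiff_const.mul (ContDiff.pow ?_ 2)
    refine ContDiff.div contDiff_const (Real.contDiff_cosh.comp ?_) ?_
    · show ContDiff ℝ 2 fun x => ((p - 1) * Real.sqrt ω / 2) * x + _root_.artanh (γ / (2 * Real.sqrt ω))
      fun_prop
    · exact fun x => (Real.cosh_pos _).ne'
  rw [contDiff_iff_contDiffAt]
  intro x
  exact hf.contDiffAt.rpow_const_of_ne (hQf_pos hp hω x).ne'

end aux

theorem stmt0 (p γ ω : ℝ) (hp : 1 < p) (hω : γ ^ 2 / 4 < ω) :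
    (∀ x : ℝ, 0 < Qsol p γ ω x) ∧
    (∀ x : ℝ, Qsol p γ ω (-x) = Qsol p γ ω x) ∧
    Continuous (Qsol p γ ω) ∧
    ContDiffOn ℝ 2 (Qsol p γ ω) {(0 : ℝ)}ᶜ ∧
    (∀ x : ℝ, x ≠ 0 →
      -(deriv (deriv (Qsol p γ ω)) x) + ω * Qsol p γ ω x = Qsol p γ ω x ^ p) ∧
    ∃ Dp Dm : ℝ,
      Tendsto (deriv (Qsol p γ ω)) (nhdsWithin 0 (Ioi 0)) (nhds Dp) ∧
      Tendsto (deriv (Qsol p γ ω)) (nhdsWithin 0 (Iio 0)) (nhds Dm) ∧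
      Dp - Dm = -γ * Qsol p γ ω 0 := by
  have hw : 0 < ω := hω0 hp hω
  have hspos : 0 < Real.sqrt ω := Real.sqrt_pos.mpr hw
  have hsq : Real.sqrt ω ^ 2 = ω := Real.sq_sqrt hw.le
  have hulin : Continuous (fun x : ℝ => Qu p γ ω x) := by
    show Continuous fun x : ℝ => ((p - 1) * Real.sqrt ω / 2) * x + _root_.artanh (γ / (2 * Real.sqrt ω))
    fun_prop
  have hcoshne : ∀ x : ℝ, Real.cosh (Qu p γ ω x) ≠ 0 := fun x => (Real.cosh_pos _).ne'
  have hcontg : Continuous (Qg p γ ω) := (contDiff_Qg hp hω).continuous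
  have hcontg1 : Continuous (Qg1 p γ ω) := by
    show Continuous fun x =>
      -Real.sqrt ω * (Real.sinh (Qu p γ ω x) / Real.cosh (Qu p γ ω x)) * Qg p γ ω x
    exact (continuous_const.mul ((Real.continuous_sinh.comp hulin).div
      (Real.continuous_cosh.comp hulin) hcoshne)).mul hcontg
  have keyP : ∀ x : ℝ, 0 < x → Qsol p γ ω =ᶠ[nhds x] Qg p γ ω := by
    intro x hx
    filter_upwards [Ioi_mem_nhds hx] with y hy
    rw [Qsol_eq, abs_of_pos hy]
  have keyN : ∀ x : ℝ, x < 0 → Qsol p γ ω =ᶠ[nhds x] (fun y => Qg p γ ω (-y)) := by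
    intro x hx
    filter_upwards [Iio_mem_nhds hx] with y hy
    rw [Qsol_eq, abs_of_neg hy]
  have hgneg : ∀ x : ℝ, HasDerivAt (fun y => Qg p γ ω (-y)) (-Qg1 p γ ω (-x)) x := by
    intro x
    have h1 : HasDerivAt (fun y : ℝ => -y) (-1) x := (hasDerivAt_id x).neg
    have h2 := (hasDerivAt_Qg hp hω (-x)).comp x h1
    have h3 : HasDerivAt (fun y => Qg p γ ω (-y)) (Qg1 p γ ω (-x) * (-1)) x := h2
    simpa using h3
  have hgneg1 : ∀ x : ℝ, HasDerivAt (fun y => -Qg1 p γ ω (-y)) (Qg2 p γ ω (-x)) x := by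
    intro x
    have h1 : HasDerivAt (fun y : ℝ => -y) (-1) x := (hasDerivAt_id x).neg
    have h2 := ((hasDerivAt_Qg1 hp hω (-x)).comp x h1).neg
    have h3 : HasDerivAt (fun y => -Qg1 p γ ω (-y)) (-(Qg2 p γ ω (-x) * (-1))) x := h2
    simpa using h3
  have hderivP : ∀ x : ℝ, 0 < x → deriv (Qsol p γ ω) x = Qg1 p γ ω x := by
    intro x hx
    rw [(keyP x hx).deriv_eq, (hasDerivAt_Qg hp hω x).deriv]
  have hderivN : ∀ x : ℝ, x < 0 → deriv (Qsol p γ ω) x = -Qg1 p γ ω (-x) := by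
    intro x hx
    rw [(keyN x hx).deriv_eq, (hgneg x).deriv]
  refine ⟨?_, ?_, ?_, ?_, ?_, ?_⟩
  · intro x; rw [Qsol_eq]; exact hQg_pos hp hω _
  · intro x; rw [Qsol_eq, Qsol_eq, abs_neg]
  · have h : Qsol p γ ω = fun x => Qg p γ ω |x| := funext (Qsol_eq p γ ω)
    rw [h]; exact hcontg.comp continuous_abs
  · intro x hx
    simp only [mem_compl_iff, mem_singleton_iff] at hx
    rcases Ne.lt_or_gt hx with h | h
    · exact ((((contDiff_Qg hp hω).comp (contDiff_id.neg)).contDiffAt).congr_of_eventuallyEq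
        (keyN x h)).contDiffWithinAt
    · exact (((contDiff_Qg hp hω).contDiffAt).congr_of_eventuallyEq
        (keyP x h)).contDiffWithinAt
  · intro x hx
    rcases hx.lt_or_gt with h | h
    · have h2 : deriv (Qsol p γ ω) =ᶠ[nhds x] (fun y => -Qg1 p γ ω (-y)) := by
        filter_upwards [Iio_mem_nhds h] with y hy
        exact hderivN y hy
      rw [h2.deriv_eq, (hgneg1 x).deriv, Qsol_eq, abs_of_neg h]
      exact ode_Qg hp hω (-x)
    · have h2 : deriv (Qsol p γ ω) =ᶠ[nhds x] Qg1 p γ ω := by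
        filter_upwards [Ioi_mem_nhds h] with y hy
        exact hderivP y hy
      rw [h2.deriv_eq, (hasDerivAt_Qg1 hp hω x).deriv, Qsol_eq, abs_of_pos h]
      exact ode_Qg hp hω x
  · refine ⟨Qg1 p γ ω 0, -Qg1 p γ ω 0, ?_, ?_, ?_⟩
    · have h1 : Tendsto (Qg1 p γ ω) (nhdsWithin 0 (Ioi 0)) (nhds (Qg1 p γ ω 0)) :=
        (hcontg1.tendsto 0).mono_left nhdsWithin_le_nhds
      refine h1.congr' ?_
      filter_upwards [self_mem_nhdsWithin] with y hy
      exact (hderivP y hy).symm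
    · have h1 : Tendsto (fun y => -Qg1 p γ ω (-y)) (nhdsWithin 0 (Iio 0))
          (nhds (-Qg1 p γ ω (-0))) := by
        refine Tendsto.mono_left ?_ nhdsWithin_le_nhds
        exact ((hcontg1.comp continuous_neg).neg).tendsto 0
      rw [neg_zero] at h1
      refine h1.congr' ?_
      filter_upwards [self_mem_nhdsWithin] with y hy
      exact (hderivN y hy).symm
    · have h4 : |γ| < 2 * Real.sqrt ω := by
        nlinarith [sq_abs γ, abs_nonneg γ]
      have h6 : |γ / (2 * Real.sqrt ω)| < 1 := by
        rw [abs_div, abs_of_pos (by positivity : (0:ℝ) < 2 * Real.sqrt ω),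
          div_lt_one (by positivity)]
        exact h4
      obtain ⟨hb1, hb2⟩ := abs_lt.mp h6
      have h0 : Qu p γ ω 0 = _root_.artanh (γ / (2 * Real.sqrt ω)) := by rw [Qu]; ring
      have ht : Real.sinh (Qu p γ ω 0) / Real.cosh (Qu p γ ω 0) = γ / (2 * Real.sqrt ω) := by
        rw [h0]; exact tanh_artanh hb1 hb2
      rw [Qsol_eq, abs_zero, show Qg1 p γ ω 0 - -Qg1 p γ ω 0 = 2 * Qg1 p γ ω 0 by ring,
        Qg1, ht]
      field_simp
end

section
/- Let p > 1, γ ∈ ℝ, and ω > γ²/4. For fixed x ∈ ℝ, the map ω ↦ Q_{ω,γ}(x) is differentiable; denote R(x) := ∂_ω Q_{ω,γ}(x). Then R is an even function, it is twice continuously differentiable on ℝ \ {0} and satisfies −R''(x) + ω·R(x) − p·Q_{ω,γ}(x)^{p−1}·R(x) = −Q_{ω,γ}(x) for every x ≠ 0, and the one-sided derivatives R'(0⁺), R'(0⁻) exist and satisfy the jump condition R'(0⁺) − R'(0⁻) = −γ·R(0). -/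
open Real Filter Set

/-- The derivative of the ground state profile with respect to the frequency `ω`. -/
noncomputable def dQdω (p γ ω : ℝ) (x : ℝ) : ℝ :=
  deriv (fun ω' : ℝ => Qsol p γ ω' x) ω

namespace Stmt3Aux

abbrev sm : WithTop ℕ∞ := (⊤ : ℕ∞)

lemma two_le_sm : (2 : WithTop ℕ∞) ≤ sm := by
  have : ((2 : ℕ∞) : WithTop ℕ∞) ≤ ((⊤ : ℕ∞) : WithTop ℕ∞) := by exact_mod_cast le_top
  simpa using this

lemma one_le_sm : (1 : WithTop ℕ∞) ≤ sm := by
  have : ((1 : ℕ∞) : WithTop ℕ∞) ≤ ((⊤ : ℕ∞) : WithTop ℕ∞) := by exact_mod_cast le_top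
  simpa using this

noncomputable def pd1 (f : ℝ × ℝ → ℝ) (q : ℝ × ℝ) : ℝ := fderiv ℝ f q (1, 0)
noncomputable def pd2 (f : ℝ × ℝ → ℝ) (q : ℝ × ℝ) : ℝ := fderiv ℝ f q (0, 1)

lemma hasDerivAt_slice1 {f : ℝ × ℝ → ℝ} {q : ℝ × ℝ} (hf : DifferentiableAt ℝ f q) :
    HasDerivAt (fun t => f (t, q.2)) (pd1 f q) q.1 := by
  have h := hf.hasFDerivAt.comp_hasDerivAt q.1
    (HasDerivAt.prodMk (hasDerivAt_id q.1) (hasDerivAt_const q.1 q.2))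
  simp only [pd1]; exact h

lemma hasDerivAt_slice2 {f : ℝ × ℝ → ℝ} {q : ℝ × ℝ} (hf : DifferentiableAt ℝ f q) :
    HasDerivAt (fun t => f (q.1, t)) (pd2 f q) q.2 := by
  have h := hf.hasFDerivAt.comp_hasDerivAt q.2
    (HasDerivAt.prodMk (hasDerivAt_const q.2 q.1) (hasDerivAt_id q.2))
  simp only [pd2]; exact h

lemma contDiffAt_pd1 {f : ℝ × ℝ → ℝ} {q : ℝ × ℝ} (hf : ContDiffAt ℝ sm f q) :
    ContDiffAt ℝ sm (pd1 f) q := by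
  have h1 : ContDiffAt ℝ sm (fderiv ℝ f) q := hf.fderiv_right (by exact_mod_cast le_rfl)
  exact (ContinuousLinearMap.apply ℝ ℝ ((1:ℝ), (0:ℝ))).contDiff.contDiffAt.comp q h1

lemma contDiffAt_pd2 {f : ℝ × ℝ → ℝ} {q : ℝ × ℝ} (hf : ContDiffAt ℝ sm f q) :
    ContDiffAt ℝ sm (pd2 f) q := by
  have h1 : ContDiffAt ℝ sm (fderiv ℝ f) q := hf.fderiv_right (by exact_mod_cast le_rfl)
  exact (ContinuousLinearMap.apply ℝ ℝ ((0:ℝ), (1:ℝ))).contDiff.contDiffAt.comp q h1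

lemma pd_comm {f : ℝ × ℝ → ℝ} {q : ℝ × ℝ} (hf : ContDiffAt ℝ sm f q) :
    pd2 (pd1 f) q = pd1 (pd2 f) q := by
  have hsymm : IsSymmSndFDerivAt ℝ f q := hf.isSymmSndFDerivAt (by rw [minSmoothness_of_isRCLikeNormedField]; exact two_le_sm)
  have hdf : DifferentiableAt ℝ (fderiv ℝ f) q :=
    (hf.fderiv_right (m := 1) (by rw [one_add_one_eq_two]; exact two_le_sm)).differentiableAt one_ne_zero
  have e1 : fderiv ℝ (pd1 f) q =
      (ContinuousLinearMap.apply ℝ ℝ ((1:ℝ), (0:ℝ))).comp (fderiv ℝ (fderiv ℝ f) q) :=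
    (((ContinuousLinearMap.apply ℝ ℝ ((1:ℝ), (0:ℝ))).hasFDerivAt).comp q
      hdf.hasFDerivAt).fderiv
  have e2 : fderiv ℝ (pd2 f) q =
      (ContinuousLinearMap.apply ℝ ℝ ((0:ℝ), (1:ℝ))).comp (fderiv ℝ (fderiv ℝ f) q) :=
    (((ContinuousLinearMap.apply ℝ ℝ ((0:ℝ), (1:ℝ))).hasFDerivAt).comp q
      hdf.hasFDerivAt).fderiv
  have := hsymm ((0:ℝ),(1:ℝ)) ((1:ℝ),(0:ℝ))
  simp only [pd1, pd2, e1, e2, ContinuousLinearMap.coe_comp', Function.comp_apply,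
    ContinuousLinearMap.apply_apply]
  exact this

/-- The profile as a smooth function of the pair `(ω, s)`. -/
noncomputable def FF (p γ : ℝ) (q : ℝ × ℝ) : ℝ :=
  (((p + 1) * q.1 / 2) *
      (1 / Real.cosh (((p - 1) * Real.sqrt q.1 / 2) * q.2 + _root_.artanh (γ / (2 * Real.sqrt q.1)))) ^ 2)
    ^ (1 / (p - 1))

lemma Qsol_eq_FF (p γ ω x : ℝ) : Qsol p γ ω x = FF p γ (ω, |x|) := rfl

section main

variable {p γ : ℝ}

lemma abs_lt_one (hω' : γ ^ 2 / 4 < ω') : -1 < γ / (2 * Real.sqrt ω') ∧ γ / (2 * Real.sqrt ω') < 1 := by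
  have h0 : 0 < ω' := lt_of_le_of_lt (by positivity) hω'
  have hrp : 0 < Real.sqrt ω' := Real.sqrt_pos.2 h0
  have hsq : Real.sqrt ω' ^ 2 = ω' := Real.sq_sqrt h0.le
  have h1 : (γ / (2 * Real.sqrt ω')) ^ 2 < 1 := by
    rw [div_pow, div_lt_one (by positivity)]
    nlinarith
  constructor
  · nlinarith [sq_nonneg (γ / (2 * Real.sqrt ω') + 1)]
  · nlinarith [sq_nonneg (γ / (2 * Real.sqrt ω') - 1)]

lemma tanh_artanh {y : ℝ} (h1 : -1 < y) (h2 : y < 1) : Real.tanh (_root_.artanh y) = y := by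
  have hy1 : 0 < 1 - y := by linarith
  have hy2 : 0 < 1 + y := by linarith
  have hz : 0 < (1 + y) / (1 - y) := by positivity
  have hE : Real.exp (_root_.artanh y) * Real.exp (_root_.artanh y) = (1 + y) / (1 - y) := by
    rw [← Real.exp_add]
    unfold _root_.artanh
    rw [show 1 / 2 * Real.log ((1 + y) / (1 - y)) + 1 / 2 * Real.log ((1 + y) / (1 - y))
        = Real.log ((1 + y) / (1 - y)) by ring, Real.exp_log hz]
  have hkey : Real.exp (_root_.artanh y) * Real.exp (_root_.artanh y) * (1 - y) = 1 + y := by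
    rw [hE]; field_simp
  have hEpos : 0 < Real.exp (_root_.artanh y) := Real.exp_pos _
  rw [Real.tanh_eq_sinh_div_cosh, Real.sinh_eq, Real.cosh_eq, Real.exp_neg]
  have hden : Real.exp (_root_.artanh y) + (Real.exp (_root_.artanh y))⁻¹ ≠ 0 := by positivity
  field_simp
  nlinarith [hkey, hEpos]

lemma contDiffAt_FF (hp : 1 < p) {q : ℝ × ℝ} (hq : γ ^ 2 / 4 < q.1) :
    ContDiffAt ℝ sm (FF p γ) q := by
  have h0 : 0 < q.1 := lt_of_le_of_lt (by positivity) hq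
  have hrp : 0 < Real.sqrt q.1 := Real.sqrt_pos.2 h0
  obtain ⟨hm1, hl1⟩ := abs_lt_one (γ := γ) hq
  have hsqrt : ContDiffAt ℝ sm (fun q : ℝ × ℝ => Real.sqrt q.1) q :=
    (contDiffAt_sqrt h0.ne').comp q contDiffAt_fst
  have hy : ContDiffAt ℝ sm (fun q : ℝ × ℝ => γ / (2 * Real.sqrt q.1)) q :=
    contDiffAt_const.div (contDiffAt_const.mul hsqrt) (by positivity)
  have hart : ContDiffAt ℝ sm (fun q : ℝ × ℝ => _root_.artanh (γ / (2 * Real.sqrt q.1))) q := by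
    unfold _root_.artanh
    refine contDiffAt_const.mul (ContDiffAt.log ?_ ?_)
    · exact (contDiffAt_const.add hy).div (contDiffAt_const.sub hy) (by
        intro h
        have : (1:ℝ) - γ / (2 * Real.sqrt q.1) = 0 := h
        linarith)
    · have : (0:ℝ) < (1 + γ / (2 * Real.sqrt q.1)) / (1 - γ / (2 * Real.sqrt q.1)) := by
        apply div_pos <;> linarith
      exact this.ne'
  have harg : ContDiffAt ℝ sm
      (fun q : ℝ × ℝ => ((p - 1) * Real.sqrt q.1 / 2) * q.2 + _root_.artanh (γ / (2 * Real.sqrt q.1))) q :=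
    (((contDiffAt_const.mul hsqrt).div_const 2).mul contDiffAt_snd).add hart
  have hcosh : ContDiffAt ℝ sm (fun q : ℝ × ℝ =>
      Real.cosh (((p - 1) * Real.sqrt q.1 / 2) * q.2 + _root_.artanh (γ / (2 * Real.sqrt q.1)))) q :=
    Real.contDiff_cosh.contDiffAt.comp q harg
  have hc0 : Real.cosh (((p - 1) * Real.sqrt q.1 / 2) * q.2 + _root_.artanh (γ / (2 * Real.sqrt q.1))) ≠ 0 :=
    (Real.cosh_pos _).ne'
  have hbase : ContDiffAt ℝ sm (fun q : ℝ × ℝ => ((p + 1) * q.1 / 2) *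
      (1 / Real.cosh (((p - 1) * Real.sqrt q.1 / 2) * q.2 + _root_.artanh (γ / (2 * Real.sqrt q.1)))) ^ 2) q :=
    ((contDiffAt_const.mul contDiffAt_fst).div_const 2).mul
      ((contDiffAt_const.div hcosh hc0).pow 2)
  have hbpos : 0 < ((p + 1) * q.1 / 2) *
      (1 / Real.cosh (((p - 1) * Real.sqrt q.1 / 2) * q.2 + _root_.artanh (γ / (2 * Real.sqrt q.1)))) ^ 2 := by
    have := Real.cosh_pos (((p - 1) * Real.sqrt q.1 / 2) * q.2 + _root_.artanh (γ / (2 * Real.sqrt q.1)))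
    have hA : 0 < (p + 1) * q.1 / 2 := by nlinarith
    positivity
  exact hbase.rpow_const_of_ne hbpos.ne'

lemma FF_pos (hp : 1 < p) {q : ℝ × ℝ} (hq : γ ^ 2 / 4 < q.1) : 0 < FF p γ q := by
  have h0 : 0 < q.1 := lt_of_le_of_lt (by positivity) hq
  have hc := Real.cosh_pos (((p - 1) * Real.sqrt q.1 / 2) * q.2 + _root_.artanh (γ / (2 * Real.sqrt q.1)))
  have hA : 0 < (p + 1) * q.1 / 2 := by nlinarith
  exact Real.rpow_pos_of_pos (by positivity) _


lemma hasDerivAt_FF_slice2 (hp : 1 < p) {ω' : ℝ} (hω' : γ ^ 2 / 4 < ω') (s : ℝ) :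
    HasDerivAt (fun t => FF p γ (ω', t))
      (-(Real.sqrt ω' *
          Real.tanh ((p - 1) * Real.sqrt ω' / 2 * s + _root_.artanh (γ / (2 * Real.sqrt ω'))))
        * FF p γ (ω', s)) s := by
  have h0 : 0 < ω' := lt_of_le_of_lt (by positivity) hω'
  have hrp : 0 < Real.sqrt ω' := Real.sqrt_pos.2 h0
  have hp1 : p - 1 ≠ 0 := by intro h; rw [sub_eq_zero] at h; exact absurd h.symm hp.ne
  set b := (p - 1) * Real.sqrt ω' / 2 with hb
  set c := _root_.artanh (γ / (2 * Real.sqrt ω')) with hc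
  set A := (p + 1) * ω' / 2 with hA
  have hApos : 0 < A := by rw [hA]; nlinarith
  have hcosh : (0:ℝ) < Real.cosh (b * s + c) := Real.cosh_pos _
  have hbase : 0 < A * ((Real.cosh (b * s + c))⁻¹) ^ 2 :=
    mul_pos hApos (pow_pos (inv_pos.2 hcosh) 2)
  have h1 : HasDerivAt (fun t : ℝ => b * t + c) b s := by
    simpa using ((hasDerivAt_id s).const_mul b).add_const c
  have h2 : HasDerivAt (fun t => Real.cosh (b * t + c)) (Real.sinh (b * s + c) * b) s :=
    (Real.hasDerivAt_cosh _).comp s h1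
  have h3 : HasDerivAt (fun t => (Real.cosh (b * t + c))⁻¹)
      (-(Real.sinh (b * s + c) * b) / Real.cosh (b * s + c) ^ 2) s := h2.inv hcosh.ne'
  have h4 : HasDerivAt (fun t => A * ((Real.cosh (b * t + c))⁻¹) ^ 2)
      (A * ((2 : ℕ) * ((Real.cosh (b * s + c))⁻¹) ^ 1 *
        (-(Real.sinh (b * s + c) * b) / Real.cosh (b * s + c) ^ 2))) s := (h3.pow 2).const_mul A
  have h5 := h4.rpow_const (p := 1 / (p - 1)) (Or.inl hbase.ne')
  have hfun : (fun t => FF p γ (ω', t))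
      = fun t => (A * ((Real.cosh (b * t + c))⁻¹) ^ 2) ^ (1 / (p - 1)) := by
    funext t
    show (_ * (1 / _) ^ 2) ^ _ = _
    rw [one_div]
  rw [hfun]
  convert h5 using 1
  show -(Real.sqrt ω' * Real.tanh (b * s + c)) * FF p γ (ω', s) = _
  have hFs : FF p γ (ω', s) = (A * ((Real.cosh (b * s + c))⁻¹) ^ 2) ^ (1 / (p - 1)) := by
    show (_ * (1 / _) ^ 2) ^ _ = _
    rw [one_div]
  rw [hFs, Real.rpow_sub_one hbase.ne', Real.tanh_eq_sinh_div_cosh, hb]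
  field_simp
  ring


lemma FF_rpow (hp : 1 < p) {ω' : ℝ} (hω' : γ ^ 2 / 4 < ω') (s : ℝ) :
    FF p γ (ω', s) ^ p
      = (((p + 1) * ω' / 2) *
          (1 / Real.cosh ((p - 1) * Real.sqrt ω' / 2 * s + _root_.artanh (γ / (2 * Real.sqrt ω')))) ^ 2)
        * FF p γ (ω', s) := by
  have h0 : 0 < ω' := lt_of_le_of_lt (by positivity) hω'
  have hp1 : p - 1 ≠ 0 := by intro h; rw [sub_eq_zero] at h; exact absurd h.symm hp.ne
  have hcosh : (0:ℝ) < Real.cosh ((p - 1) * Real.sqrt ω' / 2 * s + _root_.artanh (γ / (2 * Real.sqrt ω'))) :=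
    Real.cosh_pos _
  have hApos : 0 < (p + 1) * ω' / 2 := by nlinarith
  set B := ((p + 1) * ω' / 2) *
    (1 / Real.cosh ((p - 1) * Real.sqrt ω' / 2 * s + _root_.artanh (γ / (2 * Real.sqrt ω')))) ^ 2 with hB
  have hBpos : 0 < B := by
    rw [hB]; exact mul_pos hApos (pow_pos (by positivity) 2)
  have hF : FF p γ (ω', s) = B ^ (1 / (p - 1)) := rfl
  rw [hF, ← Real.rpow_mul hBpos.le]
  have hkp : 1 / (p - 1) * p = 1 / (p - 1) + 1 := by field_simp; ring
  rw [hkp, Real.rpow_add_one hBpos.ne']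
  ring


lemma hasDerivAt_ode (hp : 1 < p) {ω' : ℝ} (hω' : γ ^ 2 / 4 < ω') (s : ℝ) :
    HasDerivAt (fun t => -(Real.sqrt ω' *
        Real.tanh ((p - 1) * Real.sqrt ω' / 2 * t + _root_.artanh (γ / (2 * Real.sqrt ω'))))
        * FF p γ (ω', t))
      (ω' * FF p γ (ω', s) - FF p γ (ω', s) ^ p) s := by
  have h0 : 0 < ω' := lt_of_le_of_lt (by positivity) hω'
  have hrp : 0 < Real.sqrt ω' := Real.sqrt_pos.2 h0
  have hsq : Real.sqrt ω' ^ 2 = ω' := Real.sq_sqrt h0.le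
  have hp1 : p - 1 ≠ 0 := by intro h; rw [sub_eq_zero] at h; exact absurd h.symm hp.ne
  have hcosh : (0:ℝ) < Real.cosh ((p - 1) * Real.sqrt ω' / 2 * s + _root_.artanh (γ / (2 * Real.sqrt ω'))) :=
    Real.cosh_pos _
  have h1 : HasDerivAt (fun t : ℝ => (p - 1) * Real.sqrt ω' / 2 * t + _root_.artanh (γ / (2 * Real.sqrt ω')))
      ((p - 1) * Real.sqrt ω' / 2) s := by
    simpa using ((hasDerivAt_id s).const_mul ((p - 1) * Real.sqrt ω' / 2)).add_const
      (_root_.artanh (γ / (2 * Real.sqrt ω')))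
  have hsh : HasDerivAt (fun t => Real.sinh ((p - 1) * Real.sqrt ω' / 2 * t + _root_.artanh (γ / (2 * Real.sqrt ω'))))
      (Real.cosh ((p - 1) * Real.sqrt ω' / 2 * s + _root_.artanh (γ / (2 * Real.sqrt ω'))) * ((p - 1) * Real.sqrt ω' / 2)) s :=
    (Real.hasDerivAt_sinh _).comp s h1
  have hch : HasDerivAt (fun t => Real.cosh ((p - 1) * Real.sqrt ω' / 2 * t + _root_.artanh (γ / (2 * Real.sqrt ω'))))
      (Real.sinh ((p - 1) * Real.sqrt ω' / 2 * s + _root_.artanh (γ / (2 * Real.sqrt ω'))) * ((p - 1) * Real.sqrt ω' / 2)) s :=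
    (Real.hasDerivAt_cosh _).comp s h1
  have htanh := by
    have := hsh.div hch hcosh.ne'
    simpa only [Pi.div_def, ← Real.tanh_eq_sinh_div_cosh] using this
  have hneg := (htanh.const_mul (Real.sqrt ω')).neg
  have hF := hasDerivAt_FF_slice2 hp hω' s
  have hprod := hneg.mul hF
  refine hprod.congr_deriv (Eq.symm ?_)
  simp only [Pi.neg_apply]
  rw [FF_rpow hp hω' s, Real.tanh_eq_sinh_div_cosh]
  have hid : Real.cosh ((p - 1) * Real.sqrt ω' / 2 * s + _root_.artanh (γ / (2 * Real.sqrt ω'))) ^ 2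
      - Real.sinh ((p - 1) * Real.sqrt ω' / 2 * s + _root_.artanh (γ / (2 * Real.sqrt ω'))) ^ 2 = 1 :=
    Real.cosh_sq_sub_sinh_sq _
  set C := Real.cosh ((p - 1) * Real.sqrt ω' / 2 * s + _root_.artanh (γ / (2 * Real.sqrt ω'))) with hC
  set S := Real.sinh ((p - 1) * Real.sqrt ω' / 2 * s + _root_.artanh (γ / (2 * Real.sqrt ω'))) with hS
  set Fv := FF p γ (ω', s) with hFv
  have hCC : C * C⁻¹ = 1 := mul_inv_cancel₀ hcosh.ne'
  linear_combination ((p + 1) * ω' * Fv / (2 * C ^ 2)) * hid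
    + (((p - 1) * (C ^ 2 - S ^ 2) / (2 * C ^ 2) - S ^ 2 / C ^ 2) * Fv) * hsq
    - (ω' * Fv * (1 + C * C⁻¹)) * hCC


lemma pd2_FF (hp : 1 < p) {ω' : ℝ} (hω' : γ ^ 2 / 4 < ω') (s : ℝ) :
    pd2 (FF p γ) (ω', s)
      = -(Real.sqrt ω' *
          Real.tanh ((p - 1) * Real.sqrt ω' / 2 * s + _root_.artanh (γ / (2 * Real.sqrt ω'))))
        * FF p γ (ω', s) := by
  have hdiff : DifferentiableAt ℝ (FF p γ) (ω', s) :=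
    (contDiffAt_FF hp hω').differentiableAt (by simp)
  exact (hasDerivAt_slice2 hdiff).unique (hasDerivAt_FF_slice2 hp hω' s)

lemma pd2_pd2_FF (hp : 1 < p) {q : ℝ × ℝ} (hq : γ ^ 2 / 4 < q.1) :
    pd2 (pd2 (FF p γ)) q = q.1 * FF p γ q - FF p γ q ^ p := by
  obtain ⟨ω', s⟩ := q
  have hdiff : DifferentiableAt ℝ (pd2 (FF p γ)) (ω', s) :=
    (contDiffAt_pd2 (contDiffAt_FF hp hq)).differentiableAt (by simp)
  have h1 := hasDerivAt_slice2 hdiff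
  have h2 : HasDerivAt (fun t => pd2 (FF p γ) (ω', t))
      (ω' * FF p γ (ω', s) - FF p γ (ω', s) ^ p) s := by
    have heq : (fun t => pd2 (FF p γ) (ω', t))
        = fun t => -(Real.sqrt ω' *
            Real.tanh ((p - 1) * Real.sqrt ω' / 2 * t + _root_.artanh (γ / (2 * Real.sqrt ω'))))
          * FF p γ (ω', t) := funext fun t => pd2_FF hp hq t
    rw [heq]
    exact hasDerivAt_ode hp hq s
  exact h1.unique h2

lemma pd2_FF_zero (hp : 1 < p) {ω' : ℝ} (hω' : γ ^ 2 / 4 < ω') :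
    pd2 (FF p γ) (ω', 0) = -(γ / 2) * FF p γ (ω', 0) := by
  have h0 : 0 < ω' := lt_of_le_of_lt (by positivity) hω'
  have hrp : 0 < Real.sqrt ω' := Real.sqrt_pos.2 h0
  obtain ⟨hm1, hl1⟩ := abs_lt_one (γ := γ) hω'
  rw [pd2_FF hp hω' 0]
  rw [show (p - 1) * Real.sqrt ω' / 2 * (0:ℝ) + _root_.artanh (γ / (2 * Real.sqrt ω'))
      = _root_.artanh (γ / (2 * Real.sqrt ω')) by ring]
  rw [tanh_artanh hm1 hl1]
  have : Real.sqrt ω' * (γ / (2 * Real.sqrt ω')) = γ / 2 := by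
    field_simp
  rw [this]

end main

end Stmt3Aux

open Stmt3Aux in

theorem stmt3 (p γ ω : ℝ) (hp : 1 < p) (hω : γ ^ 2 / 4 < ω) :
    (∀ x : ℝ, DifferentiableAt ℝ (fun ω' : ℝ => Qsol p γ ω' x) ω) ∧
    (∀ x : ℝ, dQdω p γ ω (-x) = dQdω p γ ω x) ∧
    ContDiffOn ℝ 2 (dQdω p γ ω) {(0 : ℝ)}ᶜ ∧
    (∀ x : ℝ, x ≠ 0 →
      -(deriv (deriv (dQdω p γ ω)) x) + ω * dQdω p γ ω x
          - p * Qsol p γ ω x ^ (p - 1) * dQdω p γ ω x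
        = -(Qsol p γ ω x)) ∧
    ∃ Dp Dm : ℝ,
      Tendsto (deriv (dQdω p γ ω)) (nhdsWithin 0 (Ioi 0)) (nhds Dp) ∧
      Tendsto (deriv (dQdω p γ ω)) (nhdsWithin 0 (Iio 0)) (nhds Dm) ∧
      Dp - Dm = -γ * dQdω p γ ω 0 := by
  have hsmFF : ∀ q : ℝ × ℝ, γ ^ 2 / 4 < q.1 → ContDiffAt ℝ sm (FF p γ) q :=
    fun q hq => contDiffAt_FF hp hq
  have hQF : ∀ x : ℝ, (fun ω' : ℝ => Qsol p γ ω' x) = fun t => FF p γ (t, |x|) :=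
    fun x => rfl
  have hdiffQ : ∀ x : ℝ, DifferentiableAt ℝ (fun ω' : ℝ => Qsol p γ ω' x) ω := by
    intro x
    rw [hQF x]
    exact (hasDerivAt_slice1 (q := ((ω : ℝ), |x|))
      ((hsmFF (ω, |x|) hω).differentiableAt (by simp))).differentiableAt
  have hdQ : ∀ x : ℝ, dQdω p γ ω x = pd1 (FF p γ) (ω, |x|) := by
    intro x
    unfold dQdω
    rw [hQF x]
    exact (hasDerivAt_slice1 (q := ((ω : ℝ), |x|))
      ((hsmFF (ω, |x|) hω).differentiableAt (by simp))).deriv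
  have hGsm : ∀ s : ℝ, ContDiffAt ℝ sm (fun s' : ℝ => pd1 (FF p γ) (ω, s')) s := fun s =>
    (contDiffAt_pd1 (hsmFF (ω, s) hω)).comp s (ContDiffAt.prodMk contDiffAt_const contDiffAt_id)
  have hG1sm : ∀ s : ℝ, ContDiffAt ℝ sm (fun s' : ℝ => pd1 (pd2 (FF p γ)) (ω, s')) s := fun s =>
    (contDiffAt_pd1 (contDiffAt_pd2 (hsmFF (ω, s) hω))).comp s
      (ContDiffAt.prodMk contDiffAt_const contDiffAt_id)
  have hG' : ∀ s : ℝ, HasDerivAt (fun s' : ℝ => pd1 (FF p γ) (ω, s'))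
      (pd1 (pd2 (FF p γ)) (ω, s)) s := by
    intro s
    have h := hasDerivAt_slice2 (q := ((ω : ℝ), s))
      ((contDiffAt_pd1 (hsmFF (ω, s) hω)).differentiableAt (by simp))
    rw [pd_comm (hsmFF (ω, s) hω)] at h
    exact h
  have hEvOpen : ∀ s : ℝ, (fun q : ℝ × ℝ => pd2 (pd2 (FF p γ)) q)
      =ᶠ[nhds ((ω : ℝ), s)] fun q => q.1 * FF p γ q - FF p γ q ^ p := by
    intro s
    have hopen : IsOpen {q : ℝ × ℝ | γ ^ 2 / 4 < q.1} := isOpen_lt continuous_const continuous_fst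
    filter_upwards [hopen.mem_nhds (show ((ω : ℝ), s) ∈ _ from hω)] with q hq
    exact pd2_pd2_FF hp hq
  have hgsm : ∀ s : ℝ, ContDiffAt ℝ sm
      (fun q : ℝ × ℝ => q.1 * FF p γ q - FF p γ q ^ p) (ω, s) := fun s =>
    (contDiffAt_fst.mul (hsmFF _ hω)).sub ((hsmFF _ hω).rpow_const_of_ne (FF_pos hp hω).ne')
  have hG1deriv : ∀ s : ℝ, HasDerivAt (fun s' : ℝ => pd1 (pd2 (FF p γ)) (ω, s'))
      (FF p γ (ω, s) + ω * pd1 (FF p γ) (ω, s)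
        - p * FF p γ (ω, s) ^ (p - 1) * pd1 (FF p γ) (ω, s)) s := by
    intro s
    have h := hasDerivAt_slice2 (q := ((ω : ℝ), s))
      ((contDiffAt_pd1 (contDiffAt_pd2 (hsmFF (ω, s) hω))).differentiableAt (by simp))
    rw [pd_comm (contDiffAt_pd2 (hsmFF (ω, s) hω))] at h
    have e1 : pd1 (pd2 (pd2 (FF p γ))) (ω, s)
        = pd1 (fun q : ℝ × ℝ => q.1 * FF p γ q - FF p γ q ^ p) (ω, s) := by
      unfold pd1
      rw [(hEvOpen s).fderiv_eq]
    have e2 : pd1 (fun q : ℝ × ℝ => q.1 * FF p γ q - FF p γ q ^ p) (ω, s)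
        = FF p γ (ω, s) + ω * pd1 (FF p γ) (ω, s)
          - p * FF p γ (ω, s) ^ (p - 1) * pd1 (FF p γ) (ω, s) := by
      have hFd : HasDerivAt (fun t => FF p γ (t, s)) (pd1 (FF p γ) (ω, s)) ω :=
        hasDerivAt_slice1 ((hsmFF (ω, s) hω).differentiableAt (by simp))
      have hmul : HasDerivAt (fun t => t * FF p γ (t, s))
          (1 * FF p γ (ω, s) + ω * pd1 (FF p γ) (ω, s)) ω := (hasDerivAt_id ω).mul hFd
      have hpow : HasDerivAt (fun t => FF p γ (t, s) ^ p)
          (pd1 (FF p γ) (ω, s) * p * FF p γ (ω, s) ^ (p - 1)) ω :=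
        hFd.rpow_const (Or.inl (FF_pos hp hω).ne')
      have hcomb := hmul.sub hpow
      have hslice := hasDerivAt_slice1 (q := ((ω : ℝ), s))
        ((hgsm s).differentiableAt (by simp))
      have huni := hslice.unique hcomb
      rw [huni]; ring
    rw [e1, e2] at h
    exact h
  have heven : ∀ x : ℝ, dQdω p γ ω (-x) = dQdω p γ ω x := by
    intro x; rw [hdQ, hdQ, abs_neg]
  have hloc_pos : ∀ y : ℝ, 0 < y →
      dQdω p γ ω =ᶠ[nhds y] fun s' : ℝ => pd1 (FF p γ) (ω, s') := by
    intro y hy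
    filter_upwards [isOpen_Ioi.mem_nhds hy] with z hz
    rw [hdQ, abs_of_pos hz]
  have hloc_neg : ∀ y : ℝ, y < 0 →
      dQdω p γ ω =ᶠ[nhds y] fun z : ℝ => pd1 (FF p γ) (ω, -z) := by
    intro y hy
    filter_upwards [isOpen_Iio.mem_nhds hy] with z hz
    rw [hdQ, abs_of_neg hz]
  have hContOn : ContDiffOn ℝ 2 (dQdω p γ ω) {(0 : ℝ)}ᶜ := by
    intro x hx
    have hx' : x ≠ 0 := by simpa using hx
    rcases hx'.lt_or_gt with hxlt | hxgt
    · have hc : ContDiffAt ℝ sm (fun z : ℝ => pd1 (FF p γ) (ω, -z)) x := by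
        have := (hGsm (-x)).comp x (contDiffAt_id.neg (𝕜 := ℝ))
        exact this
      exact ((hc.of_le two_le_sm).congr_of_eventuallyEq (hloc_neg x hxlt)).contDiffWithinAt
    · exact (((hGsm x).of_le two_le_sm).congr_of_eventuallyEq
        (hloc_pos x hxgt)).contDiffWithinAt
  have hderiv_pos : ∀ y : ℝ, 0 < y →
      deriv (dQdω p γ ω) y = pd1 (pd2 (FF p γ)) (ω, y) := by
    intro y hy
    rw [(hloc_pos y hy).deriv_eq, (hG' y).deriv]
  have hderiv_neg : ∀ y : ℝ, y < 0 →
      deriv (dQdω p γ ω) y = -(pd1 (pd2 (FF p γ)) (ω, -y)) := by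
    intro y hy
    rw [(hloc_neg y hy).deriv_eq, deriv_comp_neg (fun s' : ℝ => pd1 (FF p γ) (ω, s')) y,
      (hG' (-y)).deriv]
  have hderiv2 : ∀ x : ℝ, x ≠ 0 → deriv (deriv (dQdω p γ ω)) x
      = FF p γ (ω, |x|) + ω * pd1 (FF p γ) (ω, |x|)
        - p * FF p γ (ω, |x|) ^ (p - 1) * pd1 (FF p γ) (ω, |x|) := by
    intro x hx
    rcases hx.lt_or_gt with hxlt | hxgt
    · have hev : deriv (dQdω p γ ω)
          =ᶠ[nhds x] fun z : ℝ => -(pd1 (pd2 (FF p γ)) (ω, -z)) := by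
        filter_upwards [isOpen_Iio.mem_nhds hxlt] with z hz
        exact hderiv_neg z hz
      rw [hev.deriv_eq, deriv.fun_neg, deriv_comp_neg (fun s' : ℝ => pd1 (pd2 (FF p γ)) (ω, s')) x,
        neg_neg, (hG1deriv (-x)).deriv, abs_of_neg hxlt]
    · have hev : deriv (dQdω p γ ω)
          =ᶠ[nhds x] fun s' : ℝ => pd1 (pd2 (FF p γ)) (ω, s') := by
        filter_upwards [isOpen_Ioi.mem_nhds hxgt] with z hz
        exact hderiv_pos z hz
      rw [hev.deriv_eq, (hG1deriv x).deriv, abs_of_pos hxgt]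
  refine ⟨hdiffQ, heven, hContOn, ?_, ?_⟩
  · intro x hx
    rw [hderiv2 x hx, hdQ x, Qsol_eq_FF]
    ring
  · refine ⟨pd1 (pd2 (FF p γ)) (ω, 0), -(pd1 (pd2 (FF p γ)) (ω, 0)), ?_, ?_, ?_⟩
    · have h1 : Tendsto (fun s' : ℝ => pd1 (pd2 (FF p γ)) (ω, s')) (nhdsWithin 0 (Ioi 0))
          (nhds (pd1 (pd2 (FF p γ)) (ω, 0))) :=
        ((hG1sm 0).continuousAt.tendsto).mono_left nhdsWithin_le_nhds
      refine h1.congr' ?_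
      filter_upwards [self_mem_nhdsWithin] with y hy
      exact (hderiv_pos y hy).symm
    · have hc0 : ContinuousAt (fun z : ℝ => -(pd1 (pd2 (FF p γ)) (ω, -z))) 0 := by
        have h1 : ContinuousAt (fun s' : ℝ => pd1 (pd2 (FF p γ)) (ω, s')) (-(0:ℝ)) := by
          rw [neg_zero]; exact (hG1sm 0).continuousAt
        exact (h1.comp (continuous_neg.continuousAt)).neg
      have h1 : Tendsto (fun z : ℝ => -(pd1 (pd2 (FF p γ)) (ω, -z))) (nhdsWithin 0 (Iio 0))
          (nhds (-(pd1 (pd2 (FF p γ)) (ω, 0)))) := by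
        have := hc0.tendsto.mono_left (nhdsWithin_le_nhds (s := Iio (0:ℝ)))
        simpa using this
      refine h1.congr' ?_
      filter_upwards [self_mem_nhdsWithin] with y hy
      exact (hderiv_neg y hy).symm
    · have hev0 : (fun t : ℝ => pd2 (FF p γ) (t, 0))
          =ᶠ[nhds ω] fun t : ℝ => -(γ / 2) * FF p γ (t, 0) := by
        filter_upwards [eventually_gt_nhds hω] with t ht
        exact pd2_FF_zero hp ht
      have hder1 : HasDerivAt (fun t : ℝ => -(γ / 2) * FF p γ (t, 0))
          (-(γ / 2) * pd1 (FF p γ) (ω, 0)) ω :=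
        (hasDerivAt_slice1 (q := ((ω : ℝ), (0:ℝ)))
          ((hsmFF (ω, 0) hω).differentiableAt (by simp))).const_mul (-(γ / 2))
      have hder2 : HasDerivAt (fun t : ℝ => pd2 (FF p γ) (t, 0))
          (-(γ / 2) * pd1 (FF p γ) (ω, 0)) ω :=
        hder1.congr_of_eventuallyEq hev0
      have hslice := hasDerivAt_slice1 (q := ((ω : ℝ), (0:ℝ)))
        ((contDiffAt_pd2 (hsmFF (ω, 0) hω)).differentiableAt (by simp))
      have hval : pd1 (pd2 (FF p γ)) (ω, 0) = -(γ / 2) * pd1 (FF p γ) (ω, 0) :=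
        hslice.unique hder2
      rw [hval, hdQ 0, abs_zero]
      ring
end

section
/- Let p > 5 and γ ≤ 0. Then for every ω > γ²/4, the map ω ↦ ∫_ℝ Q_{ω,γ}(x)² dx has strictly negative derivative, i.e. d/dω ‖Q_{ω,γ}‖²_{L²(ℝ)} < 0. -/
open Real Filter Set MeasureTheory

lemma Qsol_sq (p γ ω : ℝ) (hp : 1 < p) (hω : 0 < ω) (x : ℝ) :
    Qsol p γ ω x ^ 2 = ((p+1)/2) ^ (2/(p-1)) * ω ^ (2/(p-1)) *
      Real.cosh (((p - 1) * Real.sqrt ω / 2) * |x| + _root_.artanh (γ / (2 * Real.sqrt ω)))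
        ^ (-(4/(p-1))) := by
  set u := ((p - 1) * Real.sqrt ω / 2) * |x| + _root_.artanh (γ / (2 * Real.sqrt ω)) with hu
  have hc : 0 < Real.cosh u := Real.cosh_pos u
  have hX : (0:ℝ) ≤ (p+1)*ω/2 * (1/Real.cosh u)^2 := by positivity
  have h1 : Qsol p γ ω x ^ 2 = ((p+1)*ω/2 * (1/Real.cosh u)^2) ^ (2/(p-1)) := by
    rw [Qsol, ← Real.rpow_natCast (_ ^ (1/(p-1))) 2, ← Real.rpow_mul hX]
    congr 1
    push_cast
    ring
  have h2 : (p+1)*ω/2 * (1/Real.cosh u)^2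
      = ((p+1)/2) * ω * Real.cosh u ^ (-(2:ℝ)) := by
    rw [Real.rpow_neg hc.le, show ((2:ℝ)) = ((2:ℕ):ℝ) by norm_num, Real.rpow_natCast]
    field_simp
  rw [h1, h2, Real.mul_rpow (by positivity) (Real.rpow_nonneg hc.le _),
    Real.mul_rpow (by positivity) hω.le, ← Real.rpow_mul hc.le]
  congr 1
  ring
lemma sech_cont (q : ℝ) : Continuous (fun t : ℝ => Real.cosh t ^ (-q)) :=
  Real.continuous_cosh.rpow_const (fun t => Or.inl (Real.cosh_pos t).ne')

lemma sech_pos (q t : ℝ) : 0 < Real.cosh t ^ (-q) :=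
  Real.rpow_pos_of_pos (Real.cosh_pos t) _

lemma sech_le (q : ℝ) (hq : 0 ≤ q) (t : ℝ) :
    Real.cosh t ^ (-q) ≤ 2 ^ q * Real.exp (-q * t) := by
  have h1 : Real.exp t / 2 ≤ Real.cosh t := by
    rw [Real.cosh_eq]
    have := (Real.exp_pos (-t)).le
    linarith
  have h2 : (0:ℝ) < Real.exp t / 2 := by positivity
  calc Real.cosh t ^ (-q) ≤ (Real.exp t / 2) ^ (-q) :=
        Real.rpow_le_rpow_of_nonpos h2 h1 (neg_nonpos.mpr hq)
    _ = 2 ^ q * Real.exp (-q * t) := by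
        rw [Real.div_rpow (Real.exp_pos t).le (by norm_num), ← Real.exp_mul,
          div_eq_mul_inv, ← Real.rpow_neg (by norm_num), neg_neg, mul_comm t (-q), mul_comm]

lemma sech_integrableOn (q b : ℝ) (hq : 0 < q) :
    IntegrableOn (fun t : ℝ => Real.cosh t ^ (-q)) (Ioi b) := by
  have hbound : IntegrableOn (fun t : ℝ => 2 ^ q * Real.exp (-q * t)) (Ioi b) :=
    (exp_neg_integrableOn_Ioi b hq).const_mul _
  refine Integrable.mono hbound ((sech_cont q).aestronglyMeasurable.restrict) ?_
  filter_upwards with t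
  rw [Real.norm_eq_abs, Real.norm_eq_abs, abs_of_pos (sech_pos q t),
    abs_of_pos (by positivity)]
  exact sech_le q hq.le t

noncomputable def sechInt (q b : ℝ) : ℝ := ∫ t in Ioi b, Real.cosh t ^ (-q)

lemma sechInt_pos (q b : ℝ) (hq : 0 < q) : 0 < sechInt q b := by
  rw [sechInt]
  rw [setIntegral_pos_iff_support_of_nonneg_ae ?_ (sech_integrableOn q b hq)]
  · have : (Function.support fun t : ℝ => Real.cosh t ^ (-q)) = univ := by
      ext t; simp [Function.mem_support, (sech_pos q t).ne']
    rw [this, univ_inter]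
    simp
  · filter_upwards with t using (sech_pos q t).le

lemma sechInt_eq (q : ℝ) (hq : 0 < q) (x : ℝ) :
    sechInt q x = sechInt q 0 - ∫ t in (0:ℝ)..x, Real.cosh t ^ (-q) := by
  have key : ∀ y z : ℝ, y ≤ z →
      sechInt q y = (∫ t in y..z, Real.cosh t ^ (-q)) + sechInt q z := by
    intro y z hyz
    rw [intervalIntegral.integral_of_le hyz, sechInt, sechInt,
      ← setIntegral_union (Ioc_disjoint_Ioi le_rfl) measurableSet_Ioi
        ((sech_integrableOn q y hq).mono_set Ioc_subset_Ioi_self)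
        (sech_integrableOn q z hq), Ioc_union_Ioi_eq_Ioi hyz]
  rcases le_total 0 x with h | h
  · rw [key 0 x h]; ring
  · rw [key x 0 h, intervalIntegral.integral_symm]; ring

lemma sechInt_hasDerivAt (q : ℝ) (hq : 0 < q) (b : ℝ) :
    HasDerivAt (fun x => sechInt q x) (-(Real.cosh b ^ (-q))) b := by
  have hd : HasDerivAt (fun x => ∫ t in (0:ℝ)..x, Real.cosh t ^ (-q))
      (Real.cosh b ^ (-q)) b := by
    refine intervalIntegral.integral_hasDerivAt_right
      ((sech_cont q).intervalIntegrable 0 b) ?_ ((sech_cont q).continuousAt)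
    exact (sech_cont q).aestronglyMeasurable.stronglyMeasurableAtFilter
  have := (hasDerivAt_const b (sechInt q 0)).sub hd
  rw [zero_sub] at this
  exact this.congr_of_eventuallyEq (by filter_upwards with x using sechInt_eq q hq x)

lemma integral_sech_abs (a b q : ℝ) (ha : 0 < a) :
    ∫ x : ℝ, Real.cosh (a * |x| + b) ^ (-q) = (2/a) * sechInt q b := by
  rw [integral_comp_abs (f := fun x => Real.cosh (a * x + b) ^ (-q))]
  have h1 : ∫ x in Ioi (0:ℝ), Real.cosh (a * x + b) ^ (-q)
      = a⁻¹ • ∫ x in Ioi (a * 0), Real.cosh (x + b) ^ (-q) :=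
    integral_comp_mul_left_Ioi (fun y => Real.cosh (y + b) ^ (-q)) 0 ha
  have h2 : ∫ x in Ioi (b - b), Real.cosh (x + b) ^ (-q)
      = ∫ y in Ioi b, Real.cosh y ^ (-q) := by
    have h := (measurePreserving_add_right (volume : Measure ℝ) b).setIntegral_preimage_emb
      (measurableEmbedding_addRight b) (fun y => Real.cosh y ^ (-q)) (Ioi b)
    simpa using h
  rw [h1, mul_zero, show (0:ℝ) = b - b by ring, h2, sechInt, smul_eq_mul]
  ring

lemma artanh_hasDerivAt (y : ℝ) (hy : |y| < 1) :
    HasDerivAt _root_.artanh (1/(1 - y^2)) y := by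
  obtain ⟨h1, h2⟩ := abs_lt.mp hy
  have d1 : HasDerivAt (fun z : ℝ => Real.log (1 + z)) (1/(1+y)) y := by
    have hadd : HasDerivAt (fun z : ℝ => 1 + z) 1 y := (hasDerivAt_id y).const_add 1
    have := (Real.hasDerivAt_log (by linarith : (1:ℝ) + y ≠ 0)).comp y hadd
    simpa [one_div, Function.comp_def] using this
  have d2 : HasDerivAt (fun z : ℝ => Real.log (1 - z)) (-(1/(1-y))) y := by
    have hsub : HasDerivAt (fun z : ℝ => 1 - z) (-1) y := (hasDerivAt_id y).const_sub 1
    have := (Real.hasDerivAt_log (by linarith : (1:ℝ) - y ≠ 0)).comp y hsub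
    simpa [one_div, Function.comp_def] using this
  have hd : HasDerivAt (fun z : ℝ => (1/2) * (Real.log (1+z) - Real.log (1-z)))
      (1/(1 - y^2)) y := by
    have := (d1.sub d2).const_mul (1/2 : ℝ)
    refine this.congr_deriv ?_
    have ha : (1:ℝ) + y ≠ 0 := by linarith
    have hb : (1:ℝ) - y ≠ 0 := by linarith
    have hc : 1 - y^2 ≠ 0 := by
      intro h; apply ha; nlinarith [sq_nonneg y]
    field_simp
    ring
  refine hd.congr_of_eventuallyEq ?_
  have hmem : ∀ᶠ z in nhds y, z ∈ Ioo (-1:ℝ) 1 :=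
    isOpen_Ioo.eventually_mem ⟨h1, h2⟩
  filter_upwards [hmem] with z hz
  rw [_root_.artanh, Real.log_div (by linarith [hz.1] : (1:ℝ)+z ≠ 0) (by linarith [hz.2] : (1:ℝ)-z ≠ 0)]

theorem stmt5 (p γ : ℝ) (hp : 5 < p) (hγ : γ ≤ 0) :
    ∀ ω : ℝ, γ ^ 2 / 4 < ω →
      ∃ m : ℝ, HasDerivAt (fun ω' : ℝ => ∫ x : ℝ, (Qsol p γ ω' x) ^ 2) m ω ∧ m < 0 := by
  intro ω hω
  have hγ2 : (0:ℝ) ≤ γ^2/4 := by positivity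
  have hω0 : 0 < ω := lt_of_le_of_lt hγ2 hω
  have hp1 : (1:ℝ) < p := by linarith
  have hp4 : (0:ℝ) < p - 1 := by linarith
  have hq : 0 < 4/(p-1) := by positivity
  have hK : 0 < ((p+1)/2) ^ (2/(p-1)) * (4/(p-1)) :=
    mul_pos (Real.rpow_pos_of_pos (by linarith) _) hq
  have key : ∀ ω' : ℝ, γ^2/4 < ω' →
      (∫ x : ℝ, Qsol p γ ω' x ^ 2) = (((p+1)/2) ^ (2/(p-1)) * (4/(p-1))) *
        ω' ^ (2/(p-1) - 1/2) * sechInt (4/(p-1)) (_root_.artanh (γ / (2 * Real.sqrt ω'))) := by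
    intro ω' hω'
    have hω'0 : 0 < ω' := lt_of_le_of_lt hγ2 hω'
    have hs : 0 < Real.sqrt ω' := Real.sqrt_pos.mpr hω'0
    have ha : 0 < (p-1) * Real.sqrt ω' / 2 := by positivity
    have step1 : (∫ x : ℝ, Qsol p γ ω' x ^ 2) =
        (((p+1)/2) ^ (2/(p-1)) * ω' ^ (2/(p-1))) *
          ∫ x : ℝ, Real.cosh (((p - 1) * Real.sqrt ω' / 2) * |x|
            + _root_.artanh (γ / (2 * Real.sqrt ω'))) ^ (-(4/(p-1))) := by
      rw [← MeasureTheory.integral_const_mul]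
      congr 1
      ext x
      rw [Qsol_sq p γ ω' hp1 hω'0 x]
    rw [step1, integral_sech_abs _ _ _ ha]
    have hmul : ω' ^ (2/(p-1)) * ω' ^ (-(1:ℝ)/2) = ω' ^ (2/(p-1) - 1/2) := by
      rw [← Real.rpow_add hω'0]
      congr 1
      ring
    have h2a : (2 : ℝ)/((p-1) * Real.sqrt ω'/2) = (4/(p-1)) * ω' ^ (-(1:ℝ)/2) := by
      rw [Real.sqrt_eq_rpow, show (-(1:ℝ)/2) = -((1:ℝ)/2) by ring,
        Real.rpow_neg hω'0.le]
      have h0 : ω' ^ ((1:ℝ)/2) ≠ 0 := (Real.rpow_pos_of_pos hω'0 _).ne'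
      field_simp
      ring
    rw [h2a, ← hmul]
    ring
  have hsω : 0 < Real.sqrt ω := Real.sqrt_pos.mpr hω0
  have hy : |γ / (2 * Real.sqrt ω)| < 1 := by
    rw [abs_div, abs_of_pos (by positivity : (0:ℝ) < 2 * Real.sqrt ω),
      div_lt_one (by positivity)]
    nlinarith [sq_abs γ, abs_nonneg γ, Real.sq_sqrt hω0.le]
  have hyd : HasDerivAt (fun ω' : ℝ => γ / (2 * Real.sqrt ω'))
      (γ/2 * ((-(1:ℝ)/2) * ω ^ ((-(1:ℝ)/2) - 1))) ω := by
    have h := (Real.hasDerivAt_rpow_const (x := ω) (p := (-(1:ℝ)/2))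
      (Or.inl hω0.ne')).const_mul (γ/2)
    refine h.congr_of_eventuallyEq ?_
    filter_upwards [isOpen_Ioi.eventually_mem (show ω ∈ Ioi (0:ℝ) from hω0)] with z hz
    have hz0 : (0:ℝ) < z := hz
    rw [Real.sqrt_eq_rpow, show (-(1:ℝ)/2) = -((1:ℝ)/2) by ring,
      Real.rpow_neg hz0.le]
    have h0 : z ^ ((1:ℝ)/2) ≠ 0 := (Real.rpow_pos_of_pos hz0 _).ne'
    field_simp
  have hart : HasDerivAt _root_.artanh (1/(1 - (γ / (2 * Real.sqrt ω))^2)) (γ / (2 * Real.sqrt ω)) :=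
    artanh_hasDerivAt _ hy
  have hb : HasDerivAt (fun ω' : ℝ => _root_.artanh (γ / (2 * Real.sqrt ω')))
      (1/(1 - (γ / (2 * Real.sqrt ω))^2) * (γ/2 * ((-(1:ℝ)/2) * ω ^ ((-(1:ℝ)/2) - 1)))) ω :=
    hart.comp (h₂ := _root_.artanh) ω hyd
  have hF : HasDerivAt (fun ω' : ℝ => sechInt (4/(p-1)) (_root_.artanh (γ / (2 * Real.sqrt ω'))))
      (-(Real.cosh (_root_.artanh (γ / (2 * Real.sqrt ω))) ^ (-(4/(p-1)))) *
        (1/(1 - (γ / (2 * Real.sqrt ω))^2) * (γ/2 * ((-(1:ℝ)/2) * ω ^ ((-(1:ℝ)/2) - 1))))) ω :=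
    (sechInt_hasDerivAt (4/(p-1)) hq _).comp ω hb
  have hpow : HasDerivAt (fun ω' : ℝ => (((p+1)/2) ^ (2/(p-1)) * (4/(p-1))) * ω' ^ (2/(p-1) - 1/2))
      ((((p+1)/2) ^ (2/(p-1)) * (4/(p-1))) * ((2/(p-1) - 1/2) * ω ^ (2/(p-1) - 1/2 - 1))) ω :=
    (Real.hasDerivAt_rpow_const (Or.inl hω0.ne')).const_mul _
  have hN := hpow.mul hF
  refine ⟨_, hN.congr_of_eventuallyEq ?_, ?_⟩
  · filter_upwards [isOpen_Ioi.eventually_mem (show ω ∈ Ioi (γ^2/4) from hω)] with z hz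
    exact key z hz
  · have hF0 : 0 < sechInt (4/(p-1)) (_root_.artanh (γ / (2 * Real.sqrt ω))) := sechInt_pos _ _ hq
    have hα : 2/(p-1) - 1/2 < 0 := by
      have : 2/(p-1) < 1/2 := by
        rw [div_lt_div_iff₀ hp4 (by norm_num : (0:ℝ) < 2)]
        linarith
      linarith
    have hpw1 : 0 < ω ^ (2/(p-1) - 1/2 - 1) := Real.rpow_pos_of_pos hω0 _
    have ht1 : (((p+1)/2) ^ (2/(p-1)) * (4/(p-1))) * ((2/(p-1) - 1/2) * ω ^ (2/(p-1) - 1/2 - 1)) *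
        sechInt (4/(p-1)) (_root_.artanh (γ / (2 * Real.sqrt ω))) < 0 := by
      have h1 : (((p+1)/2) ^ (2/(p-1)) * (4/(p-1))) * ((2/(p-1) - 1/2) * ω ^ (2/(p-1) - 1/2 - 1)) < 0 :=
        mul_neg_of_pos_of_neg hK (mul_neg_of_neg_of_pos hα hpw1)
      exact mul_neg_of_neg_of_pos h1 hF0
    have hyd0 : 0 ≤ γ/2 * ((-(1:ℝ)/2) * ω ^ ((-(1:ℝ)/2) - 1)) := by
      have h1 : (0:ℝ) < ω ^ ((-(1:ℝ)/2) - 1) := Real.rpow_pos_of_pos hω0 _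
      nlinarith
    have hy2 : 0 < 1 - (γ / (2 * Real.sqrt ω))^2 := by
      nlinarith [sq_abs (γ / (2 * Real.sqrt ω)), abs_nonneg (γ / (2 * Real.sqrt ω))]
    have hsch : 0 < Real.cosh (_root_.artanh (γ / (2 * Real.sqrt ω))) ^ (-(4/(p-1))) := sech_pos _ _
    have ht2 : (((p+1)/2) ^ (2/(p-1)) * (4/(p-1))) * ω ^ (2/(p-1) - 1/2) *
        (-(Real.cosh (_root_.artanh (γ / (2 * Real.sqrt ω))) ^ (-(4/(p-1)))) *
          (1/(1 - (γ / (2 * Real.sqrt ω))^2) * (γ/2 * ((-(1:ℝ)/2) * ω ^ ((-(1:ℝ)/2) - 1))))) ≤ 0 := by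
      have h1 : 0 ≤ 1/(1 - (γ / (2 * Real.sqrt ω))^2) *
          (γ/2 * ((-(1:ℝ)/2) * ω ^ ((-(1:ℝ)/2) - 1))) :=
        mul_nonneg (by positivity) hyd0
      have h2 : 0 < (((p+1)/2) ^ (2/(p-1)) * (4/(p-1))) * ω ^ (2/(p-1) - 1/2) :=
        mul_pos hK (Real.rpow_pos_of_pos hω0 _)
      have h3 : -(Real.cosh (_root_.artanh (γ / (2 * Real.sqrt ω))) ^ (-(4/(p-1)))) *
          (1/(1 - (γ / (2 * Real.sqrt ω))^2) * (γ/2 * ((-(1:ℝ)/2) * ω ^ ((-(1:ℝ)/2) - 1)))) ≤ 0 :=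
        mul_nonpos_of_nonpos_of_nonneg (neg_nonpos.mpr hsch.le) h1
      exact mul_nonpos_of_nonneg_of_nonpos h2.le h3
    linarith
end

section
/- Let p > 1, let γ₁, γ₂ ≤ 0, let ω₁ > γ₁²/4 and ω₂ > γ₂²/4, and let 0 < c < min(√ω₁, √ω₂). Then there exists a constant C > 0 such that for all y₁, y₂, v, μ ∈ ℝ, | ∫_ℝ Q_{ω₁,γ₁}(x − y₁) · Q_{ω₂,γ₂}(x − y₂) · e^{i(v·x + μ)} dx | ≤ C·e^{−c·|y₁ − y₂|}. (Exponential smallness of the overlap of two translated solitons.) -/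
open Real Complex MeasureTheory

lemma Qsol_nonneg {p γ ω : ℝ} (hp : 1 < p) (hω : 0 < ω) (x : ℝ) : 0 ≤ Qsol p γ ω x := by
  have h1 : (0:ℝ) ≤ (p + 1) * ω / 2 := by nlinarith
  exact Real.rpow_nonneg (mul_nonneg h1 (sq_nonneg _)) _

lemma Qsol_le_exp {p γ ω : ℝ} (hp : 1 < p) (hω : γ ^ 2 / 4 < ω) (x : ℝ) :
    Qsol p γ ω x ≤
      (4 * ((p + 1) * ω / 2) * Real.exp (-2 * _root_.artanh (γ / (2 * Real.sqrt ω)))) ^ (1 / (p - 1)) *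
        Real.exp (-(Real.sqrt ω * |x|)) := by
  have hω0 : 0 < ω := lt_of_le_of_lt (by positivity) hω
  have hp1 : (0:ℝ) < p - 1 := by linarith
  have hs : 0 < Real.sqrt ω := Real.sqrt_pos.mpr hω0
  set s := Real.sqrt ω with hs_def
  set θ := _root_.artanh (γ / (2 * s)) with hθ_def
  set y := (p - 1) * s / 2 * |x| + θ with hy_def
  have hA : (0:ℝ) < (p + 1) * ω / 2 := by nlinarith
  have hsech : 1 / Real.cosh y ≤ 2 * Real.exp (-y) := by
    rw [div_le_iff₀ (Real.cosh_pos y)]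
    have h1 : Real.exp (-y) * Real.exp y = 1 := by rw [← Real.exp_add]; simp
    rw [Real.cosh_eq]
    nlinarith [sq_nonneg (Real.exp (-y)), (Real.exp_pos (-y)).le]
  have hsech0 : (0:ℝ) ≤ 1 / Real.cosh y := by positivity
  have hbase : ((p + 1) * ω / 2) * (1 / Real.cosh y) ^ 2 ≤
      (4 * ((p + 1) * ω / 2) * Real.exp (-2 * θ)) * Real.exp (-((p - 1) * s * |x|)) := by
    have h2 : (1 / Real.cosh y) ^ 2 ≤ (2 * Real.exp (-y)) ^ 2 :=
      pow_le_pow_left₀ hsech0 hsech 2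
    have h3 : Real.exp (-y) ^ 2 = Real.exp (-2 * θ) * Real.exp (-((p - 1) * s * |x|)) := by
      rw [sq, ← Real.exp_add, ← Real.exp_add]
      congr 1
      rw [hy_def]; ring
    have h4 : ((p + 1) * ω / 2) * (1 / Real.cosh y) ^ 2 ≤
        ((p + 1) * ω / 2) * (2 * Real.exp (-y)) ^ 2 :=
      mul_le_mul_of_nonneg_left h2 hA.le
    calc ((p + 1) * ω / 2) * (1 / Real.cosh y) ^ 2
        ≤ ((p + 1) * ω / 2) * (2 * Real.exp (-y)) ^ 2 := h4
      _ = (4 * ((p + 1) * ω / 2) * Real.exp (-2 * θ)) * Real.exp (-((p - 1) * s * |x|)) := by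
          rw [mul_pow, h3]; ring
  have hr : (0:ℝ) ≤ 1 / (p - 1) := by positivity
  have hmain := Real.rpow_le_rpow (by positivity) hbase hr
  unfold Qsol
  refine le_trans hmain ?_
  rw [Real.mul_rpow (by positivity) (Real.exp_pos _).le, ← Real.exp_mul]
  refine mul_le_mul_of_nonneg_left (le_of_eq ?_) (Real.rpow_nonneg (by positivity) _)
  congr 1
  field_simp

theorem stmt9 (p γ₁ γ₂ ω₁ ω₂ c : ℝ) (hp : 1 < p) (hγ₁ : γ₁ ≤ 0) (hγ₂ : γ₂ ≤ 0)
    (hω₁ : γ₁ ^ 2 / 4 < ω₁) (hω₂ : γ₂ ^ 2 / 4 < ω₂)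
    (hc : 0 < c) (hc' : c < min (Real.sqrt ω₁) (Real.sqrt ω₂)) :
    ∃ C : ℝ, 0 < C ∧ ∀ y₁ y₂ v μ : ℝ,
      ‖∫ x : ℝ, ((Qsol p γ₁ ω₁ (x - y₁) : ℂ) * (Qsol p γ₂ ω₂ (x - y₂) : ℂ) *
          Complex.exp (Complex.I * ((v : ℂ) * (x : ℂ) + (μ : ℂ))))‖
        ≤ C * Real.exp (-c * |y₁ - y₂|) := by
  have hp1 : (0:ℝ) < p - 1 := by linarith
  have hω₁0 : 0 < ω₁ := lt_of_le_of_lt (by positivity) hω₁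
  have hω₂0 : 0 < ω₂ := lt_of_le_of_lt (by positivity) hω₂
  have hs₁ : 0 < Real.sqrt ω₁ := Real.sqrt_pos.mpr hω₁0
  have hs₂ : 0 < Real.sqrt ω₂ := Real.sqrt_pos.mpr hω₂0
  set M₁ := (4 * ((p + 1) * ω₁ / 2) *
      Real.exp (-2 * _root_.artanh (γ₁ / (2 * Real.sqrt ω₁)))) ^ (1 / (p - 1)) with hM₁_def
  set M₂ := (4 * ((p + 1) * ω₂ / 2) *
      Real.exp (-2 * _root_.artanh (γ₂ / (2 * Real.sqrt ω₂)))) ^ (1 / (p - 1)) with hM₂_def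
  have hM₁ : 0 < M₁ := Real.rpow_pos_of_pos (by positivity) _
  have hM₂ : 0 < M₂ := Real.rpow_pos_of_pos (by positivity) _
  set ε := min (Real.sqrt ω₁) (Real.sqrt ω₂) - c with hε_def
  have hε : 0 < ε := sub_pos.mpr hc'
  -- integrability of x ↦ exp (-ε * |x|)
  have hIoi : IntegrableOn (fun x : ℝ => Real.exp (-ε * |x|)) (Set.Ioi 0) := by
    refine (exp_neg_integrableOn_Ioi 0 hε).congr_fun (fun x hx => ?_) measurableSet_Ioi
    rw [abs_of_pos hx]
  have hIic : IntegrableOn (fun x : ℝ => Real.exp (-ε * |x|)) (Set.Iic 0) := by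
    rw [← Measure.map_neg_eq_self (volume : Measure ℝ)]
    have m : MeasurableEmbedding fun x : ℝ => -x := (Homeomorph.neg ℝ).measurableEmbedding
    rw [m.integrableOn_map_iff]
    simp_rw [Function.comp_def, abs_neg, Set.neg_preimage, Set.neg_Iic, neg_zero]
    exact Iff.mpr integrableOn_Ici_iff_integrableOn_Ioi hIoi
  have hint : Integrable (fun x : ℝ => Real.exp (-ε * |x|)) := by
    rw [← integrableOn_univ, ← Set.Iic_union_Ioi (a := (0:ℝ))]
    exact hIic.union hIoi
  set J := ∫ x : ℝ, Real.exp (-ε * |x|) with hJ_def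
  have hJ0 : 0 ≤ J := integral_nonneg fun x => (Real.exp_pos _).le
  refine ⟨M₁ * M₂ * (J + 1), by positivity, fun y₁ y₂ v μ => ?_⟩
  set d := |y₁ - y₂| with hd_def
  have key : ∀ x : ℝ,
      ‖((Qsol p γ₁ ω₁ (x - y₁) : ℂ) * (Qsol p γ₂ ω₂ (x - y₂) : ℂ) *
          Complex.exp (Complex.I * ((v : ℂ) * (x : ℂ) + (μ : ℂ))))‖
        ≤ (M₁ * M₂ * Real.exp (-c * d)) * Real.exp (-ε * |x - y₁|) := by
    intro x
    have hexp : ‖Complex.exp (Complex.I * ((v : ℂ) * (x : ℂ) + (μ : ℂ)))‖ = 1 := by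
      have hre : (Complex.I * ((v : ℂ) * (x : ℂ) + (μ : ℂ))).re = 0 := by simp
      rw [Complex.norm_exp, hre, Real.exp_zero]
    rw [norm_mul, norm_mul, hexp, mul_one, Complex.norm_real, Complex.norm_real,
      Real.norm_eq_abs, Real.norm_eq_abs, _root_.abs_of_nonneg (Qsol_nonneg hp hω₁0 _),
      _root_.abs_of_nonneg (Qsol_nonneg hp hω₂0 _)]
    have h1 := Qsol_le_exp hp hω₁ (x - y₁)
    have h2 := Qsol_le_exp hp hω₂ (x - y₂)
    have hQ1 := Qsol_nonneg (γ := γ₁) hp hω₁0 (x - y₁)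
    calc Qsol p γ₁ ω₁ (x - y₁) * Qsol p γ₂ ω₂ (x - y₂)
        ≤ (M₁ * Real.exp (-(Real.sqrt ω₁ * |x - y₁|))) *
            (M₂ * Real.exp (-(Real.sqrt ω₂ * |x - y₂|))) := by
          exact mul_le_mul h1 h2 (Qsol_nonneg hp hω₂0 _) (by positivity)
      _ = M₁ * M₂ * Real.exp (-(Real.sqrt ω₁ * |x - y₁|) + -(Real.sqrt ω₂ * |x - y₂|)) := by
          rw [Real.exp_add]; ring
      _ ≤ M₁ * M₂ * (Real.exp (-c * d) * Real.exp (-ε * |x - y₁|)) := by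
          refine mul_le_mul_of_nonneg_left ?_ (by positivity)
          rw [← Real.exp_add]
          refine Real.exp_le_exp.mpr ?_
          have hd : d ≤ |x - y₁| + |x - y₂| := by
            rw [hd_def]
            calc |y₁ - y₂| = |(y₁ - x) + (x - y₂)| := by ring_nf
              _ ≤ |y₁ - x| + |x - y₂| := abs_add_le _ _
              _ = |x - y₁| + |x - y₂| := by rw [abs_sub_comm y₁ x]
          have hcd : c * d ≤ c * (|x - y₁| + |x - y₂|) := mul_le_mul_of_nonneg_left hd hc.le
          have h5 : (c + ε) * |x - y₁| ≤ Real.sqrt ω₁ * |x - y₁| := by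
            refine mul_le_mul_of_nonneg_right ?_ (abs_nonneg _)
            rw [hε_def]
            have := min_le_left (Real.sqrt ω₁) (Real.sqrt ω₂)
            linarith
          have h6 : (c + ε) * |x - y₂| ≤ Real.sqrt ω₂ * |x - y₂| := by
            refine mul_le_mul_of_nonneg_right ?_ (abs_nonneg _)
            rw [hε_def]
            have := min_le_right (Real.sqrt ω₁) (Real.sqrt ω₂)
            linarith
          have h7 : 0 ≤ ε * |x - y₂| := mul_nonneg hε.le (abs_nonneg _)
          nlinarith [abs_nonneg (x - y₁), abs_nonneg (x - y₂)]
      _ = (M₁ * M₂ * Real.exp (-c * d)) * Real.exp (-ε * |x - y₁|) := by ring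
  have hintg : Integrable (fun x : ℝ =>
      (M₁ * M₂ * Real.exp (-c * d)) * Real.exp (-ε * |x - y₁|)) :=
    (hint.comp_sub_right y₁).const_mul _
  calc ‖∫ x : ℝ, ((Qsol p γ₁ ω₁ (x - y₁) : ℂ) * (Qsol p γ₂ ω₂ (x - y₂) : ℂ) *
          Complex.exp (Complex.I * ((v : ℂ) * (x : ℂ) + (μ : ℂ))))‖
      ≤ ∫ x : ℝ, ‖((Qsol p γ₁ ω₁ (x - y₁) : ℂ) * (Qsol p γ₂ ω₂ (x - y₂) : ℂ) *
          Complex.exp (Complex.I * ((v : ℂ) * (x : ℂ) + (μ : ℂ))))‖ :=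
        norm_integral_le_integral_norm _
    _ ≤ ∫ x : ℝ, (M₁ * M₂ * Real.exp (-c * d)) * Real.exp (-ε * |x - y₁|) := by
        refine integral_mono_of_nonneg (Filter.Eventually.of_forall fun x => norm_nonneg _)
          hintg (Filter.Eventually.of_forall key)
    _ = (M₁ * M₂ * Real.exp (-c * d)) * ∫ x : ℝ, Real.exp (-ε * |x - y₁|) :=
        integral_const_mul _ _
    _ = (M₁ * M₂ * Real.exp (-c * d)) * J := by
        rw [hJ_def]
        congr 1
        exact integral_sub_right_eq_self (fun x => Real.exp (-ε * |x|)) y₁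
    _ ≤ M₁ * M₂ * (J + 1) * Real.exp (-c * d) := by
        nlinarith [mul_pos (mul_pos hM₁ hM₂) (Real.exp_pos (-c * d))]
end

section
/- Let s ∈ (0, 2). Then for every x ≥ 0, x^{s/2} = ( sin(πs/2) / π ) · ∫₀^∞ t^{s/2 − 1} · ( x / (t + x) ) dt, where for x > 0 the integral converges absolutely (and for x = 0 both sides vanish). -/
open Real Set MeasureTheory

lemma aux_integrable {a : ℝ} (h0 : 0 < a) (h1 : a < 1) :
    IntegrableOn (fun t : ℝ => t ^ (a - 1) / (1 + t)) (Ioi 0) := by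
  have hmeas : AEStronglyMeasurable (fun t : ℝ => t ^ (a - 1) / (1 + t))
      (volume.restrict (Ioi (0:ℝ))) := by
    apply Measurable.aestronglyMeasurable
    fun_prop
  rw [← Ioc_union_Ioi_eq_Ioi (zero_le_one (α := ℝ)), integrableOn_union]
  constructor
  · have hb : IntegrableOn (fun t : ℝ => t ^ (a - 1)) (Ioc 0 1) := by
      have := intervalIntegral.intervalIntegrable_rpow' (a := 0) (b := 1) (r := a - 1)
        (by linarith)
      rwa [intervalIntegrable_iff_integrableOn_Ioc_of_le zero_le_one] at this
    refine hb.mono' (hmeas.mono_measure (Measure.restrict_mono Ioc_subset_Ioi_self le_rfl)) ?_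
    filter_upwards [ae_restrict_mem measurableSet_Ioc] with t ht
    have h1t : (0:ℝ) < 1 + t := by linarith [ht.1]
    rw [Real.norm_eq_abs, abs_div, abs_of_nonneg (rpow_nonneg ht.1.le _), abs_of_pos h1t]
    calc t ^ (a-1) / (1+t) ≤ t ^ (a-1) / 1 := by
          gcongr <;> first | exact rpow_nonneg ht.1.le _ | linarith [ht.1]
      _ = t ^ (a-1) := div_one _
  · have hb : IntegrableOn (fun t : ℝ => t ^ (a - 2)) (Ioi 1) :=
      integrableOn_Ioi_rpow_of_lt (by linarith) one_pos
    refine hb.mono' (hmeas.mono_measure (Measure.restrict_mono (Ioi_subset_Ioi zero_le_one) le_rfl)) ?_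
    filter_upwards [ae_restrict_mem measurableSet_Ioi] with t ht
    have ht1 : (1:ℝ) < t := ht
    have h1t : (0:ℝ) < 1 + t := by linarith
    rw [Real.norm_eq_abs, abs_div, abs_of_nonneg (rpow_nonneg (by linarith : (0:ℝ) ≤ t) _), abs_of_pos h1t]
    calc t ^ (a-1) / (1+t) ≤ t ^ (a-1) / t := by
          gcongr <;> first | exact rpow_nonneg (by linarith : (0:ℝ) ≤ t) _ | linarith
      _ = t ^ (a-2) := by
          rw [div_eq_iff (by linarith : t ≠ 0), ← Real.rpow_add_one (by linarith : t ≠ 0)]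
          norm_num
          ring_nf

lemma aux_beta {a : ℝ} (h0 : 0 < a) (h1 : a < 1) :
    ∫ x in (0:ℝ)..1, x ^ (a - 1) * (1 - x) ^ (-a) = π / Real.sin (π * a) := by
  have hB : Complex.betaIntegral a ((1 - a : ℝ) : ℂ) = ((π / Real.sin (π * a) : ℝ) : ℂ) := by
    have h := Complex.Gamma_mul_Gamma_eq_betaIntegral
      (s := (a : ℂ)) (t := ((1 - a : ℝ) : ℂ)) (by simpa using h0) (by simp [h1])
    have h2 : (a : ℂ) + ((1 - a : ℝ) : ℂ) = 1 := by push_cast; ring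
    rw [h2, Complex.Gamma_one, one_mul] at h
    rw [← h, Complex.Gamma_ofReal, Complex.Gamma_ofReal, ← Complex.ofReal_mul,
      Real.Gamma_mul_Gamma_one_sub]
  have hcongr : ∀ x ∈ uIcc (0:ℝ) 1,
      (x : ℂ) ^ ((a : ℂ) - 1) * ((1:ℂ) - x) ^ (((1 - a : ℝ) : ℂ) - 1)
        = ((x ^ (a - 1) * (1 - x) ^ (-a) : ℝ) : ℂ) := by
    intro x hx
    rw [uIcc_of_le zero_le_one] at hx
    have hx0 : (0:ℝ) ≤ x := hx.1
    have hx1 : (0:ℝ) ≤ 1 - x := by linarith [hx.2]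
    have e1 : ((a : ℂ) - 1) = ((a - 1 : ℝ) : ℂ) := by push_cast; ring
    have e2 : (((1 - a : ℝ) : ℂ) - 1) = ((-a : ℝ) : ℂ) := by push_cast; ring
    have e3 : ((1:ℂ) - x) = ((1 - x : ℝ) : ℂ) := by push_cast; ring
    rw [e1, e2, e3, ← Complex.ofReal_cpow hx0, ← Complex.ofReal_cpow hx1,
      ← Complex.ofReal_mul]
  rw [Complex.betaIntegral, intervalIntegral.integral_congr hcongr,
    intervalIntegral.integral_ofReal] at hB
  exact_mod_cast hB

lemma aux_integral {a : ℝ} (h0 : 0 < a) (h1 : a < 1) :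
    ∫ t in Ioi (0:ℝ), t ^ (a - 1) / (1 + t) = π / Real.sin (π * a) := by
  set f : ℝ → ℝ := fun t => t / (1 + t) with hf
  have hderiv : ∀ t ∈ Ioi (0:ℝ), HasDerivWithinAt f (1 / (1 + t) ^ 2) (Ioi 0) t := by
    intro t ht
    have h1t : (1:ℝ) + t ≠ 0 := by have := mem_Ioi.mp ht; positivity
    have : HasDerivAt f ((1 * (1 + t) - t * 1) / (1 + t) ^ 2) t := by
      exact (hasDerivAt_id t).div ((hasDerivAt_id t).const_add 1) h1t
    have h2 : (1 * (1 + t) - t * 1) / (1 + t) ^ 2 = 1 / (1 + t) ^ 2 := by ring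
    exact (h2 ▸ this).hasDerivWithinAt
  have hinj : InjOn f (Ioi 0) := by
    intro t₁ ht₁ t₂ ht₂ h
    have h1 : (1:ℝ) + t₁ ≠ 0 := by have := mem_Ioi.mp ht₁; positivity
    have h2 : (1:ℝ) + t₂ ≠ 0 := by have := mem_Ioi.mp ht₂; positivity
    simp only [hf] at h
    field_simp at h
    linarith
  have himg : f '' Ioi 0 = Ioo 0 1 := by
    ext y
    constructor
    · rintro ⟨t, ht, rfl⟩
      have ht' : (0:ℝ) < t := ht
      have h1t : (0:ℝ) < 1 + t := by linarith
      exact ⟨div_pos ht' h1t, (div_lt_one h1t).mpr (by linarith)⟩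
    · rintro ⟨hy0, hy1⟩
      refine ⟨y / (1 - y), ?_, ?_⟩
      · exact div_pos hy0 (by linarith)
      · have : (1:ℝ) - y ≠ 0 := by linarith
        simp only [hf]
        field_simp
        ring
  have key := integral_image_eq_integral_abs_deriv_smul measurableSet_Ioi hderiv hinj
    (fun x : ℝ => x ^ (a - 1) * (1 - x) ^ (-a))
  rw [himg] at key
  have lhs : ∫ x in Ioo (0:ℝ) 1, x ^ (a - 1) * (1 - x) ^ (-a)
      = ∫ x in (0:ℝ)..1, x ^ (a - 1) * (1 - x) ^ (-a) := by
    rw [intervalIntegral.integral_of_le zero_le_one, ← integral_Ioc_eq_integral_Ioo]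
  have rhs : ∀ t ∈ Ioi (0:ℝ),
      |1 / (1 + t) ^ 2| • (f t ^ (a - 1) * (1 - f t) ^ (-a)) = t ^ (a - 1) / (1 + t) := by
    intro t ht
    have ht' : (0:ℝ) < t := ht
    have h1t : (0:ℝ) < 1 + t := by linarith
    have e0 : (1:ℝ) - f t = 1 / (1 + t) := by simp only [hf]; field_simp; ring
    have e1 : f t ^ (a - 1) = t ^ (a - 1) / (1 + t) ^ (a - 1) :=
      Real.div_rpow ht'.le h1t.le (a-1)
    have e2 : ((1:ℝ) / (1 + t)) ^ (-a) = (1 + t) ^ a := by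
      rw [one_div, ← Real.rpow_neg_one, ← Real.rpow_mul h1t.le]
      norm_num
    rw [e0, e1, e2, smul_eq_mul, abs_of_pos (by positivity)]
    rw [div_mul_eq_mul_div, div_mul_eq_mul_div, one_mul, div_div, div_eq_div_iff (by positivity)
      (by positivity), ← Real.rpow_natCast (1+t) 2, ← Real.rpow_add h1t]
    rw [mul_assoc, ← Real.rpow_add_one h1t.ne']
    congr 1
    push_cast
    ring
  rw [setIntegral_congr_fun measurableSet_Ioi rhs] at key
  rw [← key, lhs, aux_beta h0 h1]

theorem stmt12 (s : ℝ) (hs0 : 0 < s) (hs2 : s < 2) :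
    (∀ x : ℝ, 0 < x →
      IntegrableOn (fun t : ℝ => t ^ (s / 2 - 1) * (x / (t + x))) (Ioi 0)) ∧
    (∀ x : ℝ, 0 ≤ x →
      x ^ (s / 2)
        = (Real.sin (Real.pi * s / 2) / Real.pi) *
            ∫ t in Ioi (0 : ℝ), t ^ (s / 2 - 1) * (x / (t + x))) := by
  set a := s / 2 with ha
  have h0 : 0 < a := by positivity
  have h1 : a < 1 := by rw [ha]; linarith
  have hint : ∀ x : ℝ, 0 < x →
      IntegrableOn (fun t : ℝ => t ^ (a - 1) * (x / (t + x))) (Ioi 0) := by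
    intro x hx
    have hiff := integrableOn_Ioi_comp_mul_left_iff
      (fun t : ℝ => t ^ (a - 1) * (x / (t + x))) 0 hx
    rw [mul_zero] at hiff
    rw [← hiff]
    have : EqOn (fun u : ℝ => (x * u) ^ (a - 1) * (x / (x * u + x)))
        (fun u : ℝ => x ^ (a - 1) * (u ^ (a - 1) / (1 + u))) (Ioi 0) := by
      intro u hu
      have hu' : (0:ℝ) < u := hu
      have h1u : (0:ℝ) < 1 + u := by linarith
      simp only
      rw [Real.mul_rpow hx.le hu'.le]
      field_simp
      ring
    refine (IntegrableOn.congr_fun ?_ this.symm measurableSet_Ioi)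
    exact (aux_integrable h0 h1).const_mul _
  have hval : ∀ x : ℝ, 0 < x →
      ∫ t in Ioi (0:ℝ), t ^ (a - 1) * (x / (t + x)) = x ^ a * (π / Real.sin (π * a)) := by
    intro x hx
    have hc := integral_comp_mul_left_Ioi (fun t : ℝ => t ^ (a - 1) * (x / (t + x))) 0 hx
    rw [mul_zero] at hc
    have heq : ∫ u in Ioi (0:ℝ), (x * u) ^ (a - 1) * (x / (x * u + x))
        = ∫ u in Ioi (0:ℝ), x ^ (a - 1) * (u ^ (a - 1) / (1 + u)) := by
      refine setIntegral_congr_fun measurableSet_Ioi fun u hu => ?_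
      have hu' : (0:ℝ) < u := hu
      rw [Real.mul_rpow hx.le hu'.le]
      field_simp
      ring
    replace hc : (∫ u in Ioi (0:ℝ), (x * u) ^ (a - 1) * (x / (x * u + x)))
        = x⁻¹ * ∫ t in Ioi (0:ℝ), t ^ (a - 1) * (x / (t + x)) := hc
    rw [heq, integral_const_mul, aux_integral h0 h1] at hc
    have h2 : x * (x ^ (a - 1) * (π / Real.sin (π * a)))
        = ∫ t in Ioi (0:ℝ), t ^ (a - 1) * (x / (t + x)) := by
      rw [hc, ← mul_assoc, mul_inv_cancel₀ hx.ne', one_mul]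
    have h3 : x * x ^ (a - 1) = x ^ a := by
      nth_rewrite 1 [← Real.rpow_one x]
      rw [← Real.rpow_add hx]
      norm_num
    rw [← h2, ← mul_assoc, h3]
  have hsin : Real.sin (π * a) ≠ 0 := by
    refine ne_of_gt (Real.sin_pos_of_pos_of_lt_pi ?_ ?_)
    · positivity
    · nlinarith [Real.pi_pos]
  constructor
  · exact hint
  · intro x hx
    rcases eq_or_lt_of_le hx with rfl | hx'
    · simp [Real.zero_rpow h0.ne']
    · rw [hval x hx', show π * s / 2 = π * a by rw [ha]; ring]
      field_simp
end

section
/- Let s > 0, λ > 0, and a ∈ ℝ with max(0, (1 − 2s)/4) < a ≤ 1. Then K := ( ∫_ℝ (η² + λ)^{−s−2a} dη )^{1/2} is finite, and for every t ≥ 0 and every measurable h : ℝ → ℂ such that η ↦ (η² + λ)^{s/2}·h(η) belongs to L²(ℝ; ℂ), the function η ↦ h(η)/(η² + λ + t) is integrable and | ∫_ℝ h(η)/(η² + λ + t) dη | ≤ K · (λ + t)^{−(1−a)} · ‖ (η² + λ)^{s/2}·h ‖_{L²}. -/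
open Real Complex MeasureTheory
open scoped ENNReal NNReal

lemma aux_integrable_s15 {lam r : ℝ} (hlam : 0 < lam) (hr : 1 / 2 < r) :
    Integrable (fun η : ℝ => (η ^ 2 + lam) ^ (-r)) := by
  have hr0 : 0 < r := lt_trans (by norm_num) hr
  set c : ℝ := min 1 lam / 2 with hc
  have hc0 : 0 < c := by positivity
  have hcont : Continuous (fun η : ℝ => (η ^ 2 + lam) ^ (-r)) := by
    apply Continuous.rpow_const (by continuity)
    intro x; left; positivity
  have hint : Integrable (fun η : ℝ => c ^ (-r) * (1 + ‖η‖) ^ (-(2 * r))) := by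
    refine Integrable.const_mul ?_ _
    apply integrable_one_add_norm (μ := volume) (E := ℝ)
    simp; linarith
  refine hint.mono' hcont.aestronglyMeasurable ?_
  filter_upwards with η
  have hx : (0:ℝ) < η ^ 2 + lam := by positivity
  have hb : c * (1 + ‖η‖) ^ 2 ≤ η ^ 2 + lam := by
    have h1 : (1 + ‖η‖) ^ 2 ≤ 2 * (1 + η ^ 2) := by
      rw [Real.norm_eq_abs]
      nlinarith [sq_nonneg (1 - |η|), _root_.sq_abs η]
    have h2 : min 1 lam * (1 + η ^ 2) ≤ η ^ 2 + lam := by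
      rcases min_cases 1 lam with ⟨h, h'⟩ | ⟨h, h'⟩ <;> rw [h] <;> nlinarith [sq_nonneg η]
    calc c * (1 + ‖η‖) ^ 2 ≤ min 1 lam / 2 * (2 * (1 + η ^ 2)) := by
          apply mul_le_mul_of_nonneg_left h1 (by positivity)
      _ = min 1 lam * (1 + η ^ 2) := by ring
      _ ≤ η ^ 2 + lam := h2
  have key : (η ^ 2 + lam) ^ (-r) ≤ c ^ (-r) * (1 + ‖η‖) ^ (-(2 * r)) := by
    have h3 : (η ^ 2 + lam) ^ (-r) ≤ (c * (1 + ‖η‖) ^ 2) ^ (-r) :=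
      Real.rpow_le_rpow_of_nonpos (by positivity) hb (by linarith)
    have h4 : (c * (1 + ‖η‖) ^ 2) ^ (-r) = c ^ (-r) * (1 + ‖η‖) ^ (-(2 * r)) := by
      rw [Real.mul_rpow (le_of_lt hc0) (by positivity), ← Real.rpow_natCast (1 + ‖η‖) 2,
        ← Real.rpow_mul (by positivity)]
      norm_num [mul_comm]
    rw [← h4]; exact h3
  rw [Real.norm_of_nonneg (show (0:ℝ) ≤ (η ^ 2 + lam) ^ (-r) by positivity)]
  exact key

theorem stmt15 (s lam a : ℝ) (hs : 0 < s) (hlam : 0 < lam)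
    (ha : max 0 ((1 - 2 * s) / 4) < a) (ha1 : a ≤ 1) :
    Integrable (fun η : ℝ => (η ^ 2 + lam) ^ (-s - 2 * a)) ∧
    ∀ t : ℝ, 0 ≤ t → ∀ h : ℝ → ℂ,
      MemLp (fun η : ℝ => (((η ^ 2 + lam) ^ (s / 2) : ℝ) : ℂ) * h η) 2 (volume : Measure ℝ) →
        Integrable (fun η : ℝ => h η / (((η ^ 2 + lam + t : ℝ)) : ℂ)) ∧
        ‖∫ η : ℝ, h η / (((η ^ 2 + lam + t : ℝ)) : ℂ)‖
          ≤ Real.sqrt (∫ η : ℝ, (η ^ 2 + lam) ^ (-s - 2 * a)) * (lam + t) ^ (-(1 - a)) *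
            (eLpNorm (fun η : ℝ => (((η ^ 2 + lam) ^ (s / 2) : ℝ) : ℂ) * h η) 2
              (volume : Measure ℝ)).toReal := by
  have ha0 : 0 < a := lt_of_le_of_lt (le_max_left _ _) ha
  have ha2 : (1 - 2 * s) / 4 < a := lt_of_le_of_lt (le_max_right _ _) ha
  have hw : Integrable (fun η : ℝ => (η ^ 2 + lam) ^ (-s - 2 * a)) := by
    have he : -s - 2 * a = -(s + 2 * a) := by ring
    rw [he]
    exact aux_integrable_s15 hlam (by linarith)
  refine ⟨hw, ?_⟩
  intro t ht h hu
  set u : ℝ → ℂ := fun η : ℝ => (((η ^ 2 + lam) ^ (s / 2) : ℝ) : ℂ) * h η with hu_def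
  set g : ℝ → ℝ := fun η : ℝ => (η ^ 2 + lam) ^ (-(s / 2)) / (η ^ 2 + lam + t) with hg_def
  have hlt : 0 < lam + t := by linarith
  set w : ℝ → ℝ := fun η : ℝ => (η ^ 2 + lam) ^ (-s - 2 * a) with hw_def
  have hw0 : 0 ≤ ∫ η : ℝ, w η := integral_nonneg fun η => Real.rpow_nonneg (by positivity) _
  set K : ℝ := Real.sqrt (∫ η : ℝ, w η) with hK
  have hK0 : 0 ≤ K := Real.sqrt_nonneg _
  set c : ℝ := (lam + t) ^ (-(1 - a)) with hc
  have hc0 : 0 < c := Real.rpow_pos_of_pos hlt _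
  -- key pointwise inequality
  have hkey : ∀ η : ℝ, (η ^ 2 + lam) ^ a * (lam + t) ^ (1 - a) ≤ η ^ 2 + lam + t := by
    intro η
    have hx : (0:ℝ) < η ^ 2 + lam := by positivity
    set M : ℝ := max (η ^ 2 + lam) (lam + t) with hM
    have hM0 : 0 < M := lt_of_lt_of_le hx (le_max_left _ _)
    calc (η ^ 2 + lam) ^ a * (lam + t) ^ (1 - a)
        ≤ M ^ a * M ^ (1 - a) := by
          apply mul_le_mul (Real.rpow_le_rpow hx.le (le_max_left _ _) ha0.le)
            (Real.rpow_le_rpow hlt.le (le_max_right _ _) (by linarith))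
            (Real.rpow_nonneg hlt.le _) (Real.rpow_nonneg hM0.le _)
      _ = M := by rw [← Real.rpow_add hM0]; norm_num
      _ ≤ η ^ 2 + lam + t :=
          max_le (by nlinarith [sq_nonneg η]) (by nlinarith [sq_nonneg η])
  have hgcont : Continuous g := by
    apply Continuous.div
    · apply Continuous.rpow_const (by continuity)
      intro x; left; positivity
    · continuity
    · intro x; positivity
  have hg2 : ∀ η : ℝ, g η ^ 2 ≤ w η * c ^ 2 := by
    intro η
    have hx : (0:ℝ) < η ^ 2 + lam := by positivity
    have hxt : (0:ℝ) < η ^ 2 + lam + t := by positivity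
    have h1 : (η ^ 2 + lam + t)⁻¹ ≤ (η ^ 2 + lam) ^ (-a) * c := by
      have h2 : (η ^ 2 + lam + t)⁻¹ ≤ ((η ^ 2 + lam) ^ a * (lam + t) ^ (1 - a))⁻¹ := by
        apply inv_anti₀ (by positivity) (hkey η)
      rw [mul_inv, ← Real.rpow_neg hx.le, ← Real.rpow_neg hlt.le] at h2
      have : -(1 - a) = -(1 - a) := rfl
      simpa [hc] using h2
    have e0 : ((η ^ 2 + lam) ^ (-(s / 2))) ^ 2 = (η ^ 2 + lam) ^ (-s) := by
      rw [← Real.rpow_natCast ((η ^ 2 + lam) ^ (-(s / 2))) 2, ← Real.rpow_mul hx.le]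
      norm_num
    have hgv : g η ^ 2 = (η ^ 2 + lam) ^ (-s) * ((η ^ 2 + lam + t)⁻¹) ^ 2 := by
      show ((η ^ 2 + lam) ^ (-(s / 2)) / (η ^ 2 + lam + t)) ^ 2
          = (η ^ 2 + lam) ^ (-s) * ((η ^ 2 + lam + t)⁻¹) ^ 2
      rw [div_pow, e0, div_eq_mul_inv, inv_pow]
    have h3 : ((η ^ 2 + lam + t)⁻¹) ^ 2 ≤ ((η ^ 2 + lam) ^ (-a) * c) ^ 2 :=
      pow_le_pow_left₀ (by positivity) h1 2
    calc g η ^ 2 ≤ (η ^ 2 + lam) ^ (-s) * (((η ^ 2 + lam) ^ (-a) * c) ^ 2) := by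
          rw [hgv]
          exact mul_le_mul_of_nonneg_left h3 (Real.rpow_nonneg hx.le _)
      _ = w η * c ^ 2 := by
          have e1 : ((η ^ 2 + lam) ^ (-a)) ^ 2 = (η ^ 2 + lam) ^ (-(2 * a)) := by
            rw [← Real.rpow_natCast ((η ^ 2 + lam) ^ (-a)) 2, ← Real.rpow_mul hx.le]
            norm_num [mul_comm]
          rw [mul_pow, e1, ← mul_assoc, ← Real.rpow_add hx,
            show -s + -(2 * a) = -s - 2 * a by ring]
  have hwc : Integrable (fun η : ℝ => w η * c ^ 2) := hw.mul_const _
  have hgm : eLpNorm g 2 volume ≤ ENNReal.ofReal (K * c) := by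
    rw [eLpNorm_eq_lintegral_rpow_enorm_toReal two_ne_zero ENNReal.ofNat_ne_top]
    have htr : (2 : ℝ≥0∞).toReal = 2 := by norm_num
    rw [htr]
    have hpt : ∀ η : ℝ, ‖g η‖ₑ ^ (2:ℝ) ≤ ENNReal.ofReal (w η * c ^ 2) := by
      intro η
      have hg0 : 0 ≤ g η := by
        rw [hg_def]; positivity
      rw [Real.enorm_eq_ofReal hg0, ENNReal.ofReal_rpow_of_nonneg hg0 (by norm_num)]
      apply ENNReal.ofReal_le_ofReal
      rw [Real.rpow_two]
      exact hg2 η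
    calc (∫⁻ η : ℝ, ‖g η‖ₑ ^ (2:ℝ)) ^ (1 / (2:ℝ))
        ≤ (∫⁻ η : ℝ, ENNReal.ofReal (w η * c ^ 2)) ^ (1 / (2:ℝ)) := by
          apply ENNReal.rpow_le_rpow (lintegral_mono hpt) (by norm_num)
      _ = (ENNReal.ofReal (∫ η : ℝ, w η * c ^ 2)) ^ (1 / (2:ℝ)) := by
          rw [ofReal_integral_eq_lintegral_ofReal hwc]
          filter_upwards with η
          have : 0 ≤ w η := Real.rpow_nonneg (by positivity) _
          positivity
      _ = ENNReal.ofReal (K * c) := by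
          rw [integral_mul_const, ENNReal.ofReal_rpow_of_nonneg (by positivity) (by norm_num)]
          congr 1
          rw [← Real.sqrt_eq_rpow, Real.sqrt_mul hw0, Real.sqrt_sq hc0.le]
  have hgmem : MemLp g 2 (volume : Measure ℝ) :=
    ⟨hgcont.aestronglyMeasurable, lt_of_le_of_lt hgm ENNReal.ofReal_lt_top⟩
  have heq : (fun η : ℝ => h η / (((η ^ 2 + lam + t : ℝ)) : ℂ)) = g • u := by
    funext η
    have hx : (0:ℝ) < η ^ 2 + lam := by positivity
    have hxt : (0:ℝ) < η ^ 2 + lam + t := by positivity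
    have hXne : (((η ^ 2 + lam + t : ℝ)) : ℂ) ≠ 0 := by
      exact_mod_cast ne_of_gt hxt
    show h η / (((η ^ 2 + lam + t : ℝ)) : ℂ) = (g η : ℝ) • u η
    have h1 : ((((η ^ 2 + lam) ^ (-(s / 2)) : ℝ)) : ℂ) * (((η ^ 2 + lam) ^ (s / 2) : ℝ) : ℂ)
        = 1 := by
      rw [← Complex.ofReal_mul, ← Real.rpow_add hx]
      norm_num
    rw [Complex.real_smul]
    simp only [hg_def, hu_def]
    rw [Complex.ofReal_div, div_mul_eq_mul_div, ← mul_assoc, h1, one_mul]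
  have hone : (1:ℝ≥0∞) / 1 = 1 / 2 + 1 / 2 := by
    rw [ENNReal.add_halves]; simp
  have hvmem : MemLp (g • u) 1 (volume : Measure ℝ) := hu.smul hgmem (hpqr := ⟨by rw [inv_one]; exact ENNReal.inv_two_add_inv_two⟩)
  have hint : Integrable (fun η : ℝ => h η / (((η ^ 2 + lam + t : ℝ)) : ℂ)) := by
    rw [heq]
    exact (memLp_one_iff_integrable).mp hvmem
  refine ⟨hint, ?_⟩
  have hsmul : eLpNorm (g • u) 1 volume ≤ eLpNorm g 2 volume * eLpNorm u 2 volume :=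
    eLpNorm_smul_le_mul_eLpNorm hu.1 hgcont.aestronglyMeasurable
      (hpqr := ⟨by rw [inv_one]; exact ENNReal.inv_two_add_inv_two⟩)
  have hfin : eLpNorm u 2 (volume : Measure ℝ) ≠ ⊤ := hu.2.ne
  rw [heq]
  calc ‖∫ η : ℝ, (g • u) η‖
      ≤ ∫ η : ℝ, ‖(g • u) η‖ := norm_integral_le_integral_norm _
    _ = (eLpNorm (g • u) 1 volume).toReal := by
        rw [eLpNorm_one_eq_lintegral_enorm,
          integral_norm_eq_lintegral_enorm hvmem.1]
    _ ≤ (ENNReal.ofReal (K * c) * eLpNorm u 2 volume).toReal := by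
        apply ENNReal.toReal_mono
        · exact ENNReal.mul_ne_top ENNReal.ofReal_ne_top hfin
        · exact le_trans hsmul (mul_le_mul_left hgm _)
    _ = K * c * (eLpNorm u 2 volume).toReal := by
        rw [ENNReal.toReal_mul, ENNReal.toReal_ofReal (by positivity)]
end
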